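/- arXiv:1607.04026 — 5 statements merged into one kernel-verified Lean document; each statement's English description precedes it below -/
import Mathlib

section
/- Let n, k ∈ ℕ with k < n, let H ⊆ ℝ with |H| ≥ n+1, and let f : H → ℝ. Then f is n-monotone (i.e., convex with respect to the polynomial Chebyshev system (1, x, …, x^{n−1})) if and only if for each k-tuple x₁ < … < x_k in H, the function x ↦ [x₁, …, x_k, x; f] (classical divided difference) is (n−k)-monotone (i.e., convex with respect to (1, x, …, x^{n−k−1})) on H ∖ {x₁, …, x_k}. -/
/-- `Φ_ω(x₁,…,x_m) = det(ω_i(x_j))`. -/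
noncomputable def Phi {m : ℕ} (ω : Fin m → ℝ → ℝ) (x : Fin m → ℝ) : ℝ :=
  Matrix.det (Matrix.of fun i j => ω i (x j))

/-- `ω` is an `m`-dimensional positive Chebyshev system over `H`. -/
def IsPosChebyshev {m : ℕ} (ω : Fin m → ℝ → ℝ) (H : Set ℝ) : Prop :=
  ∀ x : Fin m → ℝ, (∀ i, x i ∈ H) → StrictMono x → 0 < Phi ω x

/-- `f` is convex with respect to the `m`-dimensional system `ω` on `S`. -/
def IsConvexWRT {m : ℕ} (ω : Fin m → ℝ → ℝ) (S : Set ℝ) (f : ℝ → ℝ) : Prop :=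
  ∀ x : Fin (m + 1) → ℝ, (∀ i, x i ∈ S) → StrictMono x → 0 ≤ Phi (Fin.snoc ω f) x

/-- The generalized divided difference `[x₁,…,x_k; f]_{ω⟨k⟩}`:
the numerator replaces the last function `ω_k` by `f`. -/
noncomputable def divDiff {k : ℕ} (ω : Fin k → ℝ → ℝ) (f : ℝ → ℝ) (x : Fin k → ℝ) : ℝ :=
  Phi (fun i => if (i : ℕ) + 1 = k then f else ω i) x / Phi ω x

lemma phi_poly {M : ℕ} (p : Fin M → ℝ) :
    Phi (fun i : Fin M => fun t : ℝ => t ^ (i : ℕ)) p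
      = ∏ i, ∏ j ∈ Finset.Ioi i, (p j - p i) := by
  have h : (Matrix.of fun (i j : Fin M) => (p j) ^ (i : ℕ))
      = Matrix.transpose (Matrix.vandermonde p) := by
    ext i j; rfl
  rw [Phi, h, Matrix.det_transpose, Matrix.det_vandermonde]

lemma vand_ne_zero {M : ℕ} {p : Fin M → ℝ} (hp : Function.Injective p) :
    (∏ i, ∏ j ∈ Finset.Ioi i, (p j - p i)) ≠ 0 := by
  rw [Finset.prod_ne_zero_iff]
  intro i _
  rw [Finset.prod_ne_zero_iff]
  intro j hj
  have hij : i ≠ j := (Finset.mem_Ioi.mp hj).ne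
  exact sub_ne_zero_of_ne fun h => hij (hp h.symm)

lemma vand_pos {M : ℕ} {p : Fin M → ℝ} (hp : StrictMono p) :
    0 < ∏ i, ∏ j ∈ Finset.Ioi i, (p j - p i) := by
  apply Finset.prod_pos
  intro i _
  apply Finset.prod_pos
  intro j hj
  exact sub_pos.mpr (hp (Finset.mem_Ioi.mp hj))

lemma phi_snoc_eq (M : ℕ) (f : ℝ → ℝ) (p : Fin (M + 1) → ℝ) (hp : Function.Injective p) :
    Phi (Fin.snoc (fun i : Fin M => fun t : ℝ => t ^ (i : ℕ)) f) p
      = (Lagrange.interpolate Finset.univ p (f ∘ p)).coeff M *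
        ∏ i, ∏ j ∈ Finset.Ioi i, (p j - p i) := by
  classical
  set P := Lagrange.interpolate Finset.univ p (f ∘ p) with hP
  have hdegP : P.degree < (M + 1 : ℕ) := by
    have := Lagrange.degree_interpolate_lt (s := Finset.univ) (f ∘ p)
      (Set.injOn_of_injective hp)
    simpa [-Lagrange.interpolate_apply] using this
  have hnd : P.natDegree < M + 1 := by
    rcases eq_or_ne P 0 with h | h
    · simp [h]
    · exact (Polynomial.natDegree_lt_iff_degree_lt h).mpr (by exact_mod_cast hdegP)
  have hrow : ∀ j, f (p j) = ∑ d : Fin (M + 1), P.coeff d * p j ^ (d : ℕ) := by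
    intro j
    have h1 : P.eval (p j) = f (p j) :=
      Lagrange.eval_interpolate_at_node (f ∘ p) (Set.injOn_of_injective hp) (Finset.mem_univ j)
    rw [← h1, Polynomial.eval_eq_sum_range' hnd, ← Fin.sum_univ_eq_sum_range]
  set B : Matrix (Fin (M + 1)) (Fin (M + 1)) ℝ := Matrix.of fun i j => p j ^ (i : ℕ) with hB
  have hmat : (Matrix.of fun (i j : Fin (M + 1)) =>
      ((Fin.snoc (fun i : Fin M => fun t : ℝ => t ^ (i : ℕ)) f : Fin (M + 1) → ℝ → ℝ) i) (p j))
      = B.updateRow (Fin.last M) (∑ d : Fin (M + 1), P.coeff d • B d) := by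
    ext i j
    refine Fin.lastCases ?_ ?_ i
    · rw [Matrix.of_apply, Fin.snoc_last, Matrix.updateRow_self]
      simp only [Finset.sum_apply, Pi.smul_apply, smul_eq_mul]
      exact hrow j
    · intro i'
      rw [Matrix.of_apply, Fin.snoc_castSucc,
        Matrix.updateRow_ne (Fin.castSucc_lt_last i').ne]
      rfl
  have hdetB : B.det = ∏ i, ∏ j ∈ Finset.Ioi i, (p j - p i) := by
    have h : B = Matrix.transpose (Matrix.vandermonde p) := by ext i j; rfl
    rw [h, Matrix.det_transpose, Matrix.det_vandermonde]
  rw [Phi, hmat, Matrix.det_updateRow_sum B (Fin.last M) (fun d => P.coeff d)]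
  rw [smul_eq_mul, hdetB]
  simp

lemma snoc_injective {k : ℕ} {x : Fin k → ℝ} {t : ℝ} (hx : Function.Injective x)
    (ht : t ∉ Set.range x) : Function.Injective (Fin.snoc x t : Fin (k + 1) → ℝ) := by
  intro a b hab
  induction a using Fin.lastCases with
  | last =>
    induction b using Fin.lastCases with
    | last => rfl
    | cast b' =>
      rw [Fin.snoc_last, Fin.snoc_castSucc] at hab
      exact absurd ⟨b', hab.symm⟩ ht
  | cast a' =>
    induction b using Fin.lastCases with
    | last =>
      rw [Fin.snoc_last, Fin.snoc_castSucc] at hab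
      exact absurd ⟨a', hab⟩ ht
    | cast b' =>
      rw [Fin.snoc_castSucc, Fin.snoc_castSucc] at hab
      exact congrArg _ (hx hab)

/-- For distinct nodes, `divDiff` with the polynomial system is the top coefficient
of the interpolation polynomial. -/
lemma divDiff_eq_coeff (k : ℕ) (f : ℝ → ℝ) (p : Fin (k + 1) → ℝ)
    (hp : Function.Injective p) :
    divDiff (fun i : Fin (k + 1) => fun t : ℝ => t ^ (i : ℕ)) f p
      = (Lagrange.interpolate Finset.univ p (f ∘ p)).coeff k := by
  have hfam : (fun i : Fin (k + 1) => if (i : ℕ) + 1 = k + 1 then f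
        else fun t : ℝ => t ^ (i : ℕ))
      = Fin.snoc (fun i : Fin k => fun t : ℝ => t ^ (i : ℕ)) f := by
    funext i
    induction i using Fin.lastCases with
    | last => simp
    | cast i' =>
      have h1 : ((i'.castSucc : Fin (k + 1)) : ℕ) = (i' : ℕ) := rfl
      have h2 : ¬((i'.castSucc : Fin (k + 1)) : ℕ) + 1 = k + 1 := by
        rw [h1]; omega
      rw [if_neg h2, Fin.snoc_castSucc]
      rfl
  rw [divDiff, hfam, phi_snoc_eq k f p hp, phi_poly p,
    mul_div_assoc, div_self (vand_ne_zero hp), mul_one]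

lemma key (k m : ℕ) (f : ℝ → ℝ) (x : Fin k → ℝ) (y : Fin (m + 1) → ℝ)
    (hq : Function.Injective (Sum.elim x y)) :
    (Lagrange.interpolate Finset.univ y
        ((fun t : ℝ => divDiff (fun i : Fin (k + 1) => fun s : ℝ => s ^ (i : ℕ)) f
          (Fin.snoc x t)) ∘ y)).coeff m
      = (Lagrange.interpolate Finset.univ (Sum.elim x y) (f ∘ Sum.elim x y)).coeff (k + m) := by
  classical
  have hx : Function.Injective x := fun a b h => by
    have := hq (show Sum.elim x y (.inl a) = Sum.elim x y (.inl b) from h)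
    exact Sum.inl.inj this
  have hy : Function.Injective y := fun a b h => by
    have := hq (show Sum.elim x y (.inr a) = Sum.elim x y (.inr b) from h)
    exact Sum.inr.inj this
  have hxy : ∀ j, y j ∉ Set.range x := by
    rintro j ⟨i, hi⟩
    have := hq (show Sum.elim x y (.inl i) = Sum.elim x y (.inr j) from hi)
    simp at this
  set q : Fin k ⊕ Fin (m + 1) → ℝ := Sum.elim x y with hqdef
  set P : Polynomial ℝ := Lagrange.interpolate Finset.univ q (f ∘ q) with hPdef
  set L : Polynomial ℝ := Lagrange.interpolate Finset.univ x (f ∘ x) with hLdef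
  set nod : Polynomial ℝ := Lagrange.nodal Finset.univ x with hnoddef
  have hPdeg : P.degree < ((k + m + 1 : ℕ) : WithBot ℕ) := by
    have h := Lagrange.degree_interpolate_lt (s := Finset.univ) (f ∘ q)
      (Set.injOn_of_injective hq)
    rw [Finset.card_univ, Fintype.card_sum, Fintype.card_fin, Fintype.card_fin] at h
    exact h
  have hLdeg : L.degree < ((k : ℕ) : WithBot ℕ) := by
    have h := Lagrange.degree_interpolate_lt (s := Finset.univ) (f ∘ x)
      (Set.injOn_of_injective hx)
    rw [Finset.card_univ, Fintype.card_fin] at h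
    exact h
  have hnodmonic : nod.Monic := Lagrange.nodal_monic
  have hnodnd : nod.natDegree = k := by
    rw [hnoddef, Lagrange.natDegree_nodal, Finset.card_univ, Fintype.card_fin]
  have hnoddeg : nod.degree = ((k : ℕ) : WithBot ℕ) := by
    rw [Polynomial.degree_eq_natDegree hnodmonic.ne_zero, hnodnd]
  set D : Polynomial ℝ := P - L with hDdef
  have hPx : ∀ i, P.eval (x i) = f (x i) := by
    intro i
    have := Lagrange.eval_interpolate_at_node (f ∘ q) (Set.injOn_of_injective hq)
      (Finset.mem_univ (Sum.inl i))
    exact this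
  have hPy : ∀ j, P.eval (y j) = f (y j) := by
    intro j
    have := Lagrange.eval_interpolate_at_node (f ∘ q) (Set.injOn_of_injective hq)
      (Finset.mem_univ (Sum.inr j))
    exact this
  have hLx : ∀ i, L.eval (x i) = f (x i) := by
    intro i
    have := Lagrange.eval_interpolate_at_node (f ∘ x) (Set.injOn_of_injective hx)
      (Finset.mem_univ i)
    exact this
  have hnodx : ∀ i, nod.eval (x i) = 0 := fun i =>
    Lagrange.eval_nodal_at_node (Finset.mem_univ i)
  have hmod : D %ₘ nod = 0 := by
    apply Polynomial.eq_zero_of_degree_lt_of_eval_index_eq_zero (v := x) Finset.univ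
      (Set.injOn_of_injective hx)
    · refine lt_of_lt_of_le (Polynomial.degree_modByMonic_lt D hnodmonic) ?_
      rw [hnoddeg]; simp
    · intro i _
      have h1 := Polynomial.modByMonic_add_div D nod
      have h2 : D.eval (x i) = 0 := by
        rw [hDdef, Polynomial.eval_sub, hPx, hLx, sub_self]
      have := congrArg (Polynomial.eval (x i)) h1
      rw [Polynomial.eval_add, Polynomial.eval_mul, hnodx, zero_mul, add_zero] at this
      rw [this, h2]
  set R : Polynomial ℝ := D /ₘ nod with hRdef
  have hDR : D = nod * R := by
    have h1 := Polynomial.modByMonic_add_div D nod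
    rw [hmod, zero_add] at h1
    exact h1.symm
  have hRnd : R.natDegree ≤ m := by
    by_cases hR0 : R = 0
    · simp [hR0]
    · have hD0 : D ≠ 0 := by
        rw [hDR]
        exact mul_ne_zero hnodmonic.ne_zero hR0
      have hDnd : D.natDegree < k + m + 1 := by
        apply (Polynomial.natDegree_lt_iff_degree_lt hD0).mpr
        rw [hDdef]
        refine lt_of_le_of_lt (Polynomial.degree_sub_le _ _) (max_lt hPdeg ?_)
        exact lt_of_lt_of_le hLdeg (by exact_mod_cast Nat.le_add_right k (m + 1))
      have : D.natDegree = k + R.natDegree := by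
        rw [hDR, Polynomial.natDegree_mul hnodmonic.ne_zero hR0, hnodnd]
      omega
  have hRdeg : R.degree < ((m + 1 : ℕ) : WithBot ℕ) := by
    by_cases hR0 : R = 0
    · rw [hR0, Polynomial.degree_zero]; exact WithBot.bot_lt_coe _
    · exact (Polynomial.natDegree_lt_iff_degree_lt hR0).mp (by omega)
  have hval : ∀ j, (fun t : ℝ => divDiff (fun i : Fin (k + 1) => fun s : ℝ => s ^ (i : ℕ)) f
      (Fin.snoc x t)) (y j) = R.eval (y j) := by
    intro j
    have hpinj : Function.Injective (Fin.snoc x (y j) : Fin (k + 1) → ℝ) :=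
      snoc_injective hx (hxy j)
    set p : Fin (k + 1) → ℝ := Fin.snoc x (y j) with hpdef
    set T : Polynomial ℝ := Lagrange.interpolate Finset.univ p (f ∘ p) with hTdef
    have hdd : divDiff (fun i : Fin (k + 1) => fun s : ℝ => s ^ (i : ℕ)) f p = T.coeff k :=
      divDiff_eq_coeff k f p hpinj
    have hTx : ∀ i, T.eval (x i) = f (x i) := by
      intro i
      have := Lagrange.eval_interpolate_at_node (f ∘ p) (Set.injOn_of_injective hpinj)
        (Finset.mem_univ i.castSucc)
      simpa [hpdef, -Lagrange.interpolate_apply] using this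
    have hTy : T.eval (y j) = f (y j) := by
      have := Lagrange.eval_interpolate_at_node (f ∘ p) (Set.injOn_of_injective hpinj)
        (Finset.mem_univ (Fin.last k))
      simpa [hpdef, -Lagrange.interpolate_apply] using this
    have hTdeg : T.degree < ((k + 1 : ℕ) : WithBot ℕ) := by
      have := Lagrange.degree_interpolate_lt (s := Finset.univ) (f ∘ p)
        (Set.injOn_of_injective hpinj)
      simpa [-Lagrange.interpolate_apply] using this
    set E : Polynomial ℝ := T - L - Polynomial.C (T.coeff k) * nod with hEdef
    have hEdeg : E.degree < ((k : ℕ) : WithBot ℕ) := by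
      rw [Polynomial.degree_lt_iff_coeff_zero]
      intro d hd
      have hd' : k ≤ d := by exact_mod_cast hd
      rcases eq_or_lt_of_le hd' with rfl | hdk
      · rw [hEdef]
        simp only [Polynomial.coeff_sub, Polynomial.coeff_C_mul]
        have hLk : L.coeff k = 0 := Polynomial.coeff_eq_zero_of_degree_lt hLdeg
        have hnodk : nod.coeff k = 1 := by
          have := hnodmonic
          rw [Polynomial.Monic, Polynomial.leadingCoeff, hnodnd] at this
          exact this
        rw [hLk, hnodk]
        ring
      · have hT : T.coeff d = 0 := Polynomial.coeff_eq_zero_of_degree_lt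
          (lt_of_lt_of_le hTdeg (by exact_mod_cast hdk))
        have hL : L.coeff d = 0 := Polynomial.coeff_eq_zero_of_degree_lt
          (lt_of_lt_of_le hLdeg (by exact_mod_cast le_of_lt hdk))
        have hnodc : (Polynomial.C (T.coeff k) * nod).coeff d = 0 := by
          apply Polynomial.coeff_eq_zero_of_natDegree_lt
          refine lt_of_le_of_lt (Polynomial.natDegree_mul_le) ?_
          simp [hnodnd]
          omega
        rw [hEdef]
        simp [hT, hL, hnodc]
    have hE0 : E = 0 := by
      apply Polynomial.eq_zero_of_degree_lt_of_eval_index_eq_zero (v := x) Finset.univ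
        (Set.injOn_of_injective hx)
      · simpa using hEdeg
      · intro i _
        rw [hEdef]
        simp [Polynomial.eval_sub, Polynomial.eval_mul, hTx, hLx, hnodx]
    have hTL : T - L = Polynomial.C (T.coeff k) * nod := by
      have h := hE0
      rw [hEdef, sub_eq_zero] at h
      exact h
    have hw : nod.eval (y j) ≠ 0 := by
      rw [hnoddef]
      apply Lagrange.eval_nodal_not_at_node
      intro i _
      exact fun h => hxy j ⟨i, h.symm⟩
    have heval1 : f (y j) - L.eval (y j) = T.coeff k * nod.eval (y j) := by
      have := congrArg (Polynomial.eval (y j)) hTL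
      rw [Polynomial.eval_sub, Polynomial.eval_mul, Polynomial.eval_C, hTy] at this
      exact this
    have heval2 : f (y j) - L.eval (y j) = nod.eval (y j) * R.eval (y j) := by
      have := congrArg (Polynomial.eval (y j)) hDR
      rw [hDdef, Polynomial.eval_sub, Polynomial.eval_mul, hPy] at this
      exact this
    have : T.coeff k = R.eval (y j) := by
      have h := heval1.symm.trans heval2
      rw [mul_comm (nod.eval (y j))] at h
      exact mul_right_cancel₀ hw h
    rw [← hdd] at this
    exact this
  have hinterp : Lagrange.interpolate Finset.univ y
      ((fun t : ℝ => divDiff (fun i : Fin (k + 1) => fun s : ℝ => s ^ (i : ℕ)) f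
        (Fin.snoc x t)) ∘ y) = R := by
    symm
    apply Lagrange.eq_interpolate_of_eval_eq _ (Set.injOn_of_injective hy)
    · simpa using hRdeg
    · intro j _
      exact (hval j).symm
  rw [hinterp]
  have hPLD : P = L + nod * R := by rw [← hDR, hDdef]; ring
  have hLco : L.coeff (k + m) = 0 := by
    apply Polynomial.coeff_eq_zero_of_degree_lt
    exact lt_of_lt_of_le hLdeg (by exact_mod_cast Nat.le_add_right k m)
  have hmulco : (nod * R).coeff (k + m) = R.coeff m := by
    by_cases hR0 : R = 0
    · simp [hR0]
    · rcases lt_or_eq_of_le hRnd with hlt | heq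
      · have h1 : (nod * R).natDegree < k + m := by
          refine lt_of_le_of_lt (Polynomial.natDegree_mul_le) ?_
          rw [hnodnd]; omega
        rw [Polynomial.coeff_eq_zero_of_natDegree_lt h1,
          Polynomial.coeff_eq_zero_of_natDegree_lt (by omega : R.natDegree < m)]
      · have := Polynomial.coeff_mul_degree_add_degree nod R
        rw [hnodnd, heq] at this
        rw [this, hnodmonic.leadingCoeff, one_mul, Polynomial.leadingCoeff, heq]
  rw [hPLD, Polynomial.coeff_add, hLco, zero_add, hmulco]

lemma interp_reindex {ι ι' : Type*} [Fintype ι] [Fintype ι'] [DecidableEq ι] [DecidableEq ι']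
    (q : ι → ℝ) (z : ι' → ℝ) (hq : Function.Injective q) (hz : Function.Injective z)
    (hcard : Fintype.card ι ≤ Fintype.card ι') (hrange : ∀ j, ∃ i, q i = z j) (f : ℝ → ℝ) :
    Lagrange.interpolate Finset.univ z (f ∘ z) = Lagrange.interpolate Finset.univ q (f ∘ q) := by
  classical
  have hdeg : (Lagrange.interpolate Finset.univ q (f ∘ q)).degree
      < ((Finset.univ : Finset ι').card : WithBot ℕ) := by
    have h := Lagrange.degree_interpolate_lt (s := Finset.univ) (f ∘ q)
      (Set.injOn_of_injective hq)
    refine lt_of_lt_of_le h ?_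
    rw [Finset.card_univ, Finset.card_univ]
    exact_mod_cast hcard
  have h1 : Lagrange.interpolate Finset.univ q (f ∘ q)
      = Lagrange.interpolate Finset.univ z
          (fun j => (Lagrange.interpolate Finset.univ q (f ∘ q)).eval (z j)) :=
    Lagrange.eq_interpolate (Set.injOn_of_injective hz) hdeg
  rw [h1]
  apply Lagrange.interpolate_eq_of_values_eq_on
  intro j _
  obtain ⟨i, hi⟩ := hrange j
  have := Lagrange.eval_interpolate_at_node (f ∘ q) (Set.injOn_of_injective hq)
    (Finset.mem_univ i)
  rw [← hi]
  rw [this]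
  show f (z j) = f (q i)
  rw [hi]

/-- Corollary 2, (i) ⇔ (ii): `f` is `n`-monotone (convex with respect to the polynomial
Chebyshev system `(1, x, …, x^{n-1})`) on `H` if and only if for each `x₁ < … < x_k` in `H`,
the classical divided difference function `x ↦ [x₁,…,x_k,x; f]` is `(n-k)`-monotone
(convex with respect to `(1, x, …, x^{n-k-1})`) on `H \ {x₁,…,x_k}`. -/
theorem n_monotone_iff_divided_difference_monotone (n k : ℕ) (hk : k < n) (H : Set ℝ)
    (hH : n + 1 ≤ H.ncard ∨ H.Infinite) (f : ℝ → ℝ) :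
    IsConvexWRT (fun i : Fin n => fun t : ℝ => t ^ (i : ℕ)) H f ↔
      ∀ x : Fin k → ℝ, (∀ i, x i ∈ H) → StrictMono x →
        IsConvexWRT (fun i : Fin (n - k) => fun t : ℝ => t ^ (i : ℕ)) (H \ Set.range x)
          (fun y : ℝ =>
            divDiff (fun i : Fin (k + 1) => fun t : ℝ => t ^ (i : ℕ)) f (Fin.snoc x y)) := by
  classical
  have hkn : k ≤ n := hk.le
  constructor
  · intro hf x hxH hxmono
    intro y hyS hymono
    have hy : Function.Injective y := hymono.injective
    have hxinj : Function.Injective x := hxmono.injective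
    have hq : Function.Injective (Sum.elim x y) := by
      intro a b hab
      cases a with
      | inl a =>
        cases b with
        | inl b => exact congrArg _ (hxinj hab)
        | inr b => exact absurd ⟨a, hab⟩ (hyS b).2
      | inr a =>
        cases b with
        | inl b => exact absurd ⟨b, hab.symm⟩ (hyS a).2
        | inr b => exact congrArg _ (hy hab)
    set s : Finset ℝ := Finset.univ.image (Sum.elim x y) with hs
    have hcs : s.card = n + 1 := by
      rw [hs, Finset.card_image_of_injective _ hq, Finset.card_univ, Fintype.card_sum,
        Fintype.card_fin, Fintype.card_fin]
      omega
    set z : Fin (n + 1) → ℝ := fun i => (s.orderIsoOfFin hcs i : ℝ) with hz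
    have hzmono : StrictMono z := by
      intro a b hab
      have := (s.orderIsoOfFin hcs).strictMono hab
      exact_mod_cast this
    have hzH : ∀ i, z i ∈ H := by
      intro i
      have hmem : z i ∈ s := (s.orderIsoOfFin hcs i).2
      rw [hs, Finset.mem_image] at hmem
      obtain ⟨a, _, ha⟩ := hmem
      rw [← ha]
      cases a with
      | inl a => exact hxH a
      | inr a => exact (hyS a).1
    have h0 := hf z hzH hzmono
    rw [phi_snoc_eq n f z hzmono.injective] at h0
    have hcoeff : 0 ≤ (Lagrange.interpolate Finset.univ z (f ∘ z)).coeff n :=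
      (mul_nonneg_iff_of_pos_right (vand_pos hzmono)).mp h0
    have hre : Lagrange.interpolate Finset.univ z (f ∘ z)
        = Lagrange.interpolate Finset.univ (Sum.elim x y) (f ∘ Sum.elim x y) := by
      apply interp_reindex _ _ hq hzmono.injective
      · rw [Fintype.card_sum, Fintype.card_fin, Fintype.card_fin, Fintype.card_fin]
        omega
      · intro j
        have hmem : z j ∈ s := (s.orderIsoOfFin hcs j).2
        rw [hs, Finset.mem_image] at hmem
        obtain ⟨a, _, ha⟩ := hmem
        exact ⟨a, ha⟩
    rw [phi_snoc_eq (n - k) _ y hy]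
    apply mul_nonneg _ (vand_pos hymono).le
    rw [key k (n - k) f x y hq]
    have hkk : k + (n - k) = n := by omega
    rw [hkk, ← hre]
    exact hcoeff
  · intro hg z hzH hzmono
    have hzinj := hzmono.injective
    set x : Fin k → ℝ := fun i => z ⟨(i : ℕ), by have := i.2; omega⟩ with hxdef
    set y : Fin (n - k + 1) → ℝ := fun j => z ⟨k + (j : ℕ), by have := j.2; omega⟩ with hydef
    have hxmono : StrictMono x := by
      intro a b hab
      apply hzmono
      simp only [Fin.mk_lt_mk]
      exact hab
    have hymono : StrictMono y := by
      intro a b hab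
      apply hzmono
      simp only [Fin.mk_lt_mk]
      omega
    have hxH : ∀ i, x i ∈ H := fun i => hzH _
    have hyH : ∀ j, y j ∈ H \ Set.range x := by
      intro j
      refine ⟨hzH _, ?_⟩
      rintro ⟨i, hi⟩
      have h := hzinj hi
      rw [Fin.mk.injEq] at h
      have := i.2
      omega
    have hq : Function.Injective (Sum.elim x y) := by
      intro a b hab
      cases a with
      | inl a =>
        cases b with
        | inl b => exact congrArg _ (hxmono.injective hab)
        | inr b =>
          exfalso
          have h := hzinj hab
          rw [Fin.mk.injEq] at h
          have := a.2
          omega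
      | inr a =>
        cases b with
        | inl b =>
          exfalso
          have h := hzinj hab
          rw [Fin.mk.injEq] at h
          have := b.2
          omega
        | inr b => exact congrArg _ (hymono.injective hab)
    have h0 := hg x hxH hxmono y hyH hymono
    rw [phi_snoc_eq (n - k) _ y hymono.injective] at h0
    have hcoeff := (mul_nonneg_iff_of_pos_right (vand_pos hymono)).mp h0
    rw [key k (n - k) f x y hq] at hcoeff
    have hre : Lagrange.interpolate Finset.univ z (f ∘ z)
        = Lagrange.interpolate Finset.univ (Sum.elim x y) (f ∘ Sum.elim x y) := by
      apply interp_reindex _ _ hq hzinj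
      · rw [Fintype.card_sum, Fintype.card_fin, Fintype.card_fin, Fintype.card_fin]
        omega
      · intro l
        by_cases hl : (l : ℕ) < k
        · refine ⟨Sum.inl ⟨(l : ℕ), hl⟩, ?_⟩
          exact congrArg z (Fin.ext rfl)
        · refine ⟨Sum.inr ⟨(l : ℕ) - k, by have := l.2; omega⟩, ?_⟩
          show z ⟨k + ((l : ℕ) - k), _⟩ = z l
          congr 1
          apply Fin.ext
          show k + ((l : ℕ) - k) = (l : ℕ)
          omega
    rw [phi_snoc_eq n f z hzinj]
    apply mul_nonneg _ (vand_pos hzmono).le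
    rw [hre]
    have hkk : k + (n - k) = n := by omega
    rw [hkk] at hcoeff
    exact hcoeff
end

section
/- Let n, k ∈ ℕ with k < n, let x₁ < … < x_k be real numbers, let x_{k+1}, …, x_{n+1} be real numbers distinct from each other and from x₁, …, x_k, and let f be a real function defined at all these points. Then the determinant of the (n−k+1)×(n−k+1) matrix whose columns are indexed by j ∈ {k+1, …, n+1}, whose rows i ∈ {k, …, n−1} have entries [x₁, …, x_k, x_j; p_i] (classical divided differences of the power functions p_i(x) = x^i), and whose last row has entries [x₁, …, x_k, x_j; f], equals the determinant of the matrix whose first n−k rows have entries x_j^{m} for m ∈ {0, 1, …, n−k−1} and whose last row has entries [x₁, …, x_k, x_j; f]. -/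
open Polynomial Matrix Finset

private lemma divDiff_congr' {k : ℕ} (ω : Fin k → ℝ → ℝ) (f g : ℝ → ℝ) (y : Fin k → ℝ)
    (h : ∀ a, f (y a) = g (y a)) : divDiff ω f y = divDiff ω g y := by
  unfold divDiff Phi
  congr 2
  ext i j
  by_cases hik : (i : ℕ) + 1 = k <;> simp [hik, h]

private lemma phi_pow {k : ℕ} (y : Fin (k+1) → ℝ) :
    Phi (fun t : Fin (k+1) => fun s : ℝ => s ^ (t : ℕ)) y = (Matrix.vandermonde y).det := by
  rw [Phi, ← Matrix.det_transpose (Matrix.vandermonde y)]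
  congr 1

private lemma phi_pow_ne {k : ℕ} (y : Fin (k+1) → ℝ) (hy : Function.Injective y) :
    Phi (fun t : Fin (k+1) => fun s : ℝ => s ^ (t : ℕ)) y ≠ 0 := by
  rw [phi_pow, Matrix.det_vandermonde]
  refine Finset.prod_ne_zero_iff.2 fun i _ => Finset.prod_ne_zero_iff.2 fun j hj => ?_
  have hij : i < j := Finset.mem_Ioi.1 hj
  exact sub_ne_zero.2 fun h => absurd (hy h.symm) (Fin.ne_of_lt hij)

private lemma divDiff_polyeval {k : ℕ} (y : Fin (k+1) → ℝ) (hy : Function.Injective y)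
    (P : ℝ[X]) (hP : P.natDegree ≤ k) :
    divDiff (fun t : Fin (k+1) => fun s : ℝ => s ^ (t : ℕ)) (fun s => P.eval s) y
      = P.coeff k := by
  have hD := phi_pow_ne y hy
  rw [divDiff]
  set V : Matrix (Fin (k+1)) (Fin (k+1)) ℝ := Matrix.of fun (i j : Fin (k+1)) => y j ^ (i : ℕ) with hV
  have hrow : (fun j => P.eval (y j)) = ∑ m : Fin (k+1), P.coeff (m : ℕ) • V m := by
    funext j
    rw [Finset.sum_apply]
    have : P.eval (y j) = ∑ r ∈ Finset.range (k+1), P.coeff r * y j ^ r :=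
      eval_eq_sum_range' (Nat.lt_succ_of_le hP) _
    rw [this, ← Fin.sum_univ_eq_sum_range (fun r => P.coeff r * y j ^ r) (k+1)]
    simp [hV, Matrix.of_apply, smul_eq_mul]
  have hnum : (Matrix.of fun (i j : Fin (k+1)) =>
      (if (i : ℕ) + 1 = k + 1 then (fun s => P.eval s) else fun s : ℝ => s ^ (i : ℕ)) (y j))
      = V.updateRow (Fin.last k) (fun j => P.eval (y j)) := by
    ext i j
    by_cases h : i = Fin.last k
    · subst h; simp [Matrix.updateRow_self]
    · have h' : (i : ℕ) ≠ k := fun hh => h (Fin.ext (by simp [Fin.val_last, hh]))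
      simp [Matrix.updateRow_ne h, h', hV]
  have : Phi (fun i : Fin (k+1) =>
      if (i : ℕ) + 1 = k + 1 then (fun s => P.eval s) else fun s : ℝ => s ^ (i : ℕ)) y
      = P.coeff k * V.det := by
    rw [Phi]
    rw [hnum, hrow, Matrix.det_updateRow_sum V (Fin.last k) (fun m => P.coeff (m : ℕ))]
    simp [Fin.val_last]
  rw [this]
  have hVP : Phi (fun t : Fin (k+1) => fun s : ℝ => s ^ (t : ℕ)) y = V.det := rfl
  rw [hVP] at hD ⊢
  field_simp

private lemma W_monic {k : ℕ} (x' : Fin k → ℝ) : (∏ a, (X - C (x' a)) : ℝ[X]).Monic :=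
  monic_prod_of_monic _ _ fun a _ => monic_X_sub_C _

private lemma W_natDegree {k : ℕ} (x' : Fin k → ℝ) :
    (∏ a, (X - C (x' a)) : ℝ[X]).natDegree = k := by
  rw [natDegree_prod _ _ fun a _ => X_sub_C_ne_zero (x' a)]
  simp

private noncomputable def Qpoly (k i : ℕ) (x' : Fin k → ℝ) : ℝ[X] :=
  ((X : ℝ[X]) ^ (k + i)) /ₘ (∏ a, (X - C (x' a)))

private lemma divDiff_pow {k i : ℕ} (x' : Fin k → ℝ) (t : ℝ)
    (hy : Function.Injective (Fin.snoc x' t : Fin (k+1) → ℝ)) :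
    divDiff (fun t : Fin (k+1) => fun s : ℝ => s ^ (t : ℕ)) (fun s => s ^ (k + i))
      (Fin.snoc x' t)
      = (Qpoly k i x').eval t := by
  rw [Qpoly]
  set W : ℝ[X] := ∏ a, (X - C (x' a)) with hW
  have hWm : W.Monic := W_monic x'
  have hWdeg : W.natDegree = k := W_natDegree x'
  set Q : ℝ[X] := ((X : ℝ[X]) ^ (k + i)) /ₘ W with hQ
  set R : ℝ[X] := ((X : ℝ[X]) ^ (k + i)) %ₘ W with hR
  set P : ℝ[X] := R + C (Q.eval t) * W with hP
  have hsplit : ∀ s : ℝ, s ^ (k + i) = R.eval s + W.eval s * Q.eval s := by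
    intro s
    conv_lhs => rw [show (s : ℝ) ^ (k + i) = ((X : ℝ[X]) ^ (k + i)).eval s by simp,
      ← modByMonic_add_div ((X : ℝ[X]) ^ (k + i)) W]
    simp
    rfl
  have hRdeg : R.degree < (k : WithBot ℕ) := by
    have := degree_modByMonic_lt ((X : ℝ[X]) ^ (k + i)) hWm
    rwa [degree_eq_natDegree hWm.ne_zero, hWdeg] at this
  have key : ∀ a : Fin (k+1),
      ((Fin.snoc x' t : Fin (k+1) → ℝ) a) ^ (k + i) = P.eval ((Fin.snoc x' t : Fin (k+1) → ℝ) a) := by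
    intro a
    refine Fin.lastCases ?_ (fun b => ?_) a
    · rw [Fin.snoc_last, hsplit t]
      simp [hP]
      ring
    · rw [Fin.snoc_castSucc, hsplit (x' b)]
      have hx0 : W.eval (x' b) = 0 := by
        rw [hW, eval_prod]
        exact Finset.prod_eq_zero (Finset.mem_univ b) (by simp)
      simp [hP, hx0]
  have hPdeg : P.natDegree ≤ k := by
    refine (natDegree_add_le _ _).trans (max_le ?_ ?_)
    · exact natDegree_le_iff_degree_le.2 hRdeg.le
    · exact (natDegree_mul_le).trans (by simp [hWdeg])
  have hcoeff : P.coeff k = Q.eval t := by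
    rw [hP, coeff_add, coeff_C_mul, coeff_eq_zero_of_degree_lt hRdeg,
      show W.coeff k = 1 from hWdeg ▸ hWm.coeff_natDegree]
    ring
  calc divDiff (fun t : Fin (k+1) => fun s : ℝ => s ^ (t : ℕ)) (fun s => s ^ (k + i))
        (Fin.snoc x' t)
      = divDiff (fun t : Fin (k+1) => fun s : ℝ => s ^ (t : ℕ)) (fun s => P.eval s)
        (Fin.snoc x' t) := divDiff_congr' _ _ _ _ (fun a => key a)
    _ = P.coeff k := divDiff_polyeval _ hy P hPdeg
    _ = Q.eval t := hcoeff

private lemma Q_natDegree {k : ℕ} (i : ℕ) (x' : Fin k → ℝ) :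
    (Qpoly k i x').natDegree = i := by
  rw [Qpoly, natDegree_divByMonic _ (W_monic x'), natDegree_X_pow, W_natDegree]
  omega

private lemma Q_monic {k : ℕ} (i : ℕ) (x' : Fin k → ℝ) :
    (Qpoly k i x').coeff i = 1 := by
  have h1 : (Qpoly k i x').leadingCoeff = 1 := by
    rw [Qpoly, leadingCoeff_divByMonic_of_monic (W_monic x')]
    · exact monic_X_pow _
    · rw [degree_eq_natDegree (W_monic x').ne_zero, W_natDegree, degree_X_pow]
      exact_mod_cast Nat.le_add_right k i
  rwa [leadingCoeff, Q_natDegree i x'] at h1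

private lemma main_aux (k m : ℕ) (x' : Fin k → ℝ) (tt : Fin (m+1) → ℝ)
    (hinj : ∀ j, Function.Injective (Fin.snoc x' (tt j) : Fin (k+1) → ℝ)) (f : ℝ → ℝ) :
    Matrix.det (Matrix.of fun i j : Fin (m+1) =>
      if (i : ℕ) < m then
        divDiff (fun t : Fin (k+1) => fun s : ℝ => s ^ (t : ℕ)) (fun s : ℝ => s ^ (k + (i : ℕ)))
          (Fin.snoc x' (tt j))
      else divDiff (fun t : Fin (k+1) => fun s : ℝ => s ^ (t : ℕ)) f (Fin.snoc x' (tt j)))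
    = Matrix.det (Matrix.of fun i j : Fin (m+1) =>
      if (i : ℕ) < m then (tt j) ^ (i : ℕ)
      else divDiff (fun t : Fin (k+1) => fun s : ℝ => s ^ (t : ℕ)) f (Fin.snoc x' (tt j))) := by
  classical
  set B : Matrix (Fin (m+1)) (Fin (m+1)) ℝ := Matrix.of fun i j =>
    if (i : ℕ) < m then (tt j) ^ (i : ℕ)
    else divDiff (fun t : Fin (k+1) => fun s : ℝ => s ^ (t : ℕ)) f (Fin.snoc x' (tt j)) with hB
  set L : Matrix (Fin (m+1)) (Fin (m+1)) ℝ := Matrix.of fun i r =>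
    if (i : ℕ) < m then (if (r : ℕ) ≤ (i : ℕ) then (Qpoly k (i : ℕ) x').coeff (r : ℕ) else 0)
    else (if i = r then 1 else 0) with hL
  have hA : (Matrix.of fun i j : Fin (m+1) =>
      if (i : ℕ) < m then
        divDiff (fun t : Fin (k+1) => fun s : ℝ => s ^ (t : ℕ)) (fun s : ℝ => s ^ (k + (i : ℕ)))
          (Fin.snoc x' (tt j))
      else divDiff (fun t : Fin (k+1) => fun s : ℝ => s ^ (t : ℕ)) f (Fin.snoc x' (tt j)))
      = L * B := by
    ext i j
    rw [Matrix.mul_apply, Matrix.of_apply]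
    by_cases hi : (i : ℕ) < m
    · rw [if_pos hi, divDiff_pow x' (tt j) (hinj j)]
      have hdeg : (Qpoly k (i : ℕ) x').natDegree = (i : ℕ) := Q_natDegree _ x'
      have hterm : ∀ r : Fin (m+1), L i r * B r j
          = if (r : ℕ) ≤ (i : ℕ) then (Qpoly k (i : ℕ) x').coeff (r : ℕ) * (tt j) ^ (r : ℕ)
            else 0 := by
        intro r
        by_cases hr : (r : ℕ) ≤ (i : ℕ)
        · have hrm : (r : ℕ) < m := lt_of_le_of_lt hr hi
          simp only [hL, hB, Matrix.of_apply, if_pos hi, if_pos hr, if_pos hrm]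
        · simp only [hL, Matrix.of_apply, if_pos hi, if_neg hr, zero_mul]
      have h1 : (Qpoly k (i : ℕ) x').eval (tt j)
          = ∑ r ∈ Finset.range ((i : ℕ) + 1), (Qpoly k (i : ℕ) x').coeff r * (tt j) ^ r :=
        eval_eq_sum_range' (by omega) _
      have h2 : ∑ r ∈ Finset.range ((i : ℕ) + 1), (Qpoly k (i : ℕ) x').coeff r * (tt j) ^ r
          = ∑ r ∈ Finset.range (m + 1),
              (if r ≤ (i : ℕ) then (Qpoly k (i : ℕ) x').coeff r * (tt j) ^ r else 0) := by
        have hs := Finset.sum_subset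
          (f := fun r => if r ≤ (i : ℕ) then (Qpoly k (i : ℕ) x').coeff r * (tt j) ^ r else 0)
          (Finset.range_subset_range.2 (show (i : ℕ) + 1 ≤ m + 1 by omega))
          (fun r _ hr => if_neg (fun h => hr (Finset.mem_range.2 (by omega))))
        rw [← hs]
        exact Finset.sum_congr rfl fun r hr =>
          (if_pos (by have := Finset.mem_range.1 hr; omega)).symm
      rw [h1, h2, ← Fin.sum_univ_eq_sum_range
        (fun r => if r ≤ (i : ℕ) then (Qpoly k (i : ℕ) x').coeff r * (tt j) ^ r else 0) (m+1)]
      exact Finset.sum_congr rfl fun r _ => (hterm r).symm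
    · rw [if_neg hi]
      have hterm : ∀ r : Fin (m+1), L i r * B r j = if i = r then B r j else 0 := by
        intro r
        by_cases h : i = r
        · subst h
          simp [hL, Matrix.of_apply, if_neg hi]
        · simp only [hL, Matrix.of_apply, if_neg hi, if_neg h, zero_mul]
      rw [Finset.sum_congr rfl fun r _ => hterm r, Finset.sum_ite_eq]
      simp [hB, hi]
  rw [hA, Matrix.det_mul]
  have htri : L.BlockTriangular OrderDual.toDual := by
    intro a b hab
    have hab' : (a : ℕ) < (b : ℕ) := hab
    by_cases ha : (a : ℕ) < m
    · simp only [hL, Matrix.of_apply, if_pos ha, if_neg (not_le.2 hab')]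
    · exfalso; have := b.isLt; omega
  have hLdet : L.det = 1 := by
    rw [Matrix.det_of_lowerTriangular L htri]
    refine Finset.prod_eq_one fun i _ => ?_
    by_cases hi : (i : ℕ) < m
    · simp only [hL, Matrix.of_apply, if_pos hi, le_refl, if_pos]
      exact Q_monic _ x'
    · simp [hL, hi]
  rw [hLdet, one_mul]

/-- The determinant reduction in the proof of Corollary 2: the determinant whose rows
`i ∈ {k,…,n-1}` consist of the classical divided differences `[x₁,…,x_k,x_j; p_i]` of the
power functions and whose last row consists of `[x₁,…,x_k,x_j; f]` (columns
`j ∈ {k+1,…,n+1}`) equals the determinant whose first `n-k` rows are the powers `x_j^m`,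
`m ∈ {0,…,n-k-1}`, with the same last row. -/
theorem divided_difference_determinant_reduction (n k : ℕ) (hk : k < n)
    (x : Fin (n + 1) → ℝ) (hinj : Function.Injective x)
    (hx : StrictMono (fun i : Fin k => x (Fin.castLE (by omega) i))) (f : ℝ → ℝ) :
    Matrix.det (Matrix.of fun i j : Fin (n - k + 1) =>
      if h : (i : ℕ) < n - k then
        divDiff (fun t : Fin (k + 1) => fun s : ℝ => s ^ (t : ℕ))
          (fun s : ℝ => s ^ (k + (i : ℕ)))
          (Fin.snoc (fun t : Fin k => x (Fin.castLE (by omega) t))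
            (x ⟨k + (j : ℕ), by have := j.isLt; omega⟩))
      else
        divDiff (fun t : Fin (k + 1) => fun s : ℝ => s ^ (t : ℕ)) f
          (Fin.snoc (fun t : Fin k => x (Fin.castLE (by omega) t))
            (x ⟨k + (j : ℕ), by have := j.isLt; omega⟩)))
    = Matrix.det (Matrix.of fun i j : Fin (n - k + 1) =>
      if h : (i : ℕ) < n - k then
        (x ⟨k + (j : ℕ), by have := j.isLt; omega⟩) ^ (i : ℕ)
      else
        divDiff (fun t : Fin (k + 1) => fun s : ℝ => s ^ (t : ℕ)) f
          (Fin.snoc (fun t : Fin k => x (Fin.castLE (by omega) t))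
            (x ⟨k + (j : ℕ), by have := j.isLt; omega⟩))) := by
  have hinjy : ∀ j : Fin (n - k + 1),
      Function.Injective ((Fin.snoc (fun t : Fin k => x (Fin.castLE (by omega : k ≤ n + 1) t))
        (x ⟨k + (j : ℕ), by have := j.isLt; omega⟩)) : Fin (k + 1) → ℝ) := by
    intro j
    have hE : ((Fin.snoc (fun t : Fin k => x (Fin.castLE (by omega : k ≤ n + 1) t))
        (x ⟨k + (j : ℕ), by have := j.isLt; omega⟩)) : Fin (k + 1) → ℝ)
        = x ∘ (fun c : Fin (k + 1) =>
          if h : (c : ℕ) < k then Fin.castLE (by omega : k ≤ n + 1) (⟨(c : ℕ), h⟩ : Fin k)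
          else ⟨k + (j : ℕ), by have := j.isLt; omega⟩) := by
      funext c
      refine Fin.lastCases ?_ (fun b => ?_) c
      · simp [Fin.snoc_last, Fin.val_last]
      · simp only [Fin.snoc_castSucc, Function.comp_apply, Fin.coe_castSucc, b.isLt, dite_true]
    rw [hE]
    refine hinj.comp ?_
    intro a b hab
    have hv := congrArg Fin.val hab
    have ha' := a.isLt
    have hb' := b.isLt
    by_cases ha : (a : ℕ) < k <;> by_cases hb : (b : ℕ) < k <;>
      simp [ha, hb] at hv <;>
      exact Fin.ext (by omega)
  simp only [dite_eq_ite]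
  exact main_aux k (n - k) _ _ hinjy f
end

section
/- Let H = (−π, 0) and let f : H → ℝ. Then f is convex with respect to the 3-dimensional positive Chebyshev system (1, cos, sin) on H if and only if for each x₁ ∈ H, the function x ↦ (f(x) − f(x₁)) / (cos x − cos x₁) is convex on H ∖ {x₁} with respect to the 2-dimensional Chebyshev system (1, −cot((x₁ + ·)/2)). -/
open Real

theorem det_fin_four' {R : Type*} [CommRing R] (A : Matrix (Fin 4) (Fin 4) R) :
    A.det = A 0 0 * (A 1 1 * (A 2 2 * A 3 3 - A 2 3 * A 3 2) - A 1 2 * (A 2 1 * A 3 3 - A 2 3 * A 3 1) + A 1 3 * (A 2 1 * A 3 2 - A 2 2 * A 3 1))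
      - A 0 1 * (A 1 0 * (A 2 2 * A 3 3 - A 2 3 * A 3 2) - A 1 2 * (A 2 0 * A 3 3 - A 2 3 * A 3 0) + A 1 3 * (A 2 0 * A 3 2 - A 2 2 * A 3 0))
      + A 0 2 * (A 1 0 * (A 2 1 * A 3 3 - A 2 3 * A 3 1) - A 1 1 * (A 2 0 * A 3 3 - A 2 3 * A 3 0) + A 1 3 * (A 2 0 * A 3 1 - A 2 1 * A 3 0))
      - A 0 3 * (A 1 0 * (A 2 1 * A 3 2 - A 2 2 * A 3 1) - A 1 1 * (A 2 0 * A 3 2 - A 2 2 * A 3 0) + A 1 2 * (A 2 0 * A 3 1 - A 2 1 * A 3 0)) := by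
  rw [Matrix.det_succ_row_zero, Fin.sum_univ_four]
  norm_num [Matrix.det_fin_three, Fin.succAbove, Fin.lt_def,
    show (Fin.succ 0 : Fin 4) = 1 from rfl, show (Fin.succ 1 : Fin 4) = 2 from rfl,
    show (Fin.succ 2 : Fin 4) = 3 from rfl, show (Fin.castSucc (0: Fin 3) : Fin 4) = 0 from rfl,
    show (Fin.castSucc (1: Fin 3) : Fin 4) = 1 from rfl, show (Fin.castSucc (2: Fin 3) : Fin 4) = 2 from rfl,
    show ((3:Fin 4):ℕ) = 3 from rfl, show ((2:Fin 4):ℕ) = 2 from rfl, show ((1:Fin 4):ℕ) = 1 from rfl]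
  ring

theorem phi4 (f : ℝ → ℝ) (x : Fin 4 → ℝ) :
    Phi (Fin.snoc ![fun _ : ℝ => (1:ℝ), Real.cos, Real.sin] f) x =
    Matrix.det !![1,1,1,1; cos (x 0), cos (x 1), cos (x 2), cos (x 3);
      sin (x 0), sin (x 1), sin (x 2), sin (x 3);
      f (x 0), f (x 1), f (x 2), f (x 3)] := by
  rw [Phi, det_fin_four', det_fin_four']
  simp only [Matrix.of_apply, Matrix.cons_val', Matrix.cons_val, Matrix.empty_val', Matrix.cons_val_fin_one]
  norm_num [Fin.snoc, Fin.castLT, show ((3:Fin 4):ℕ) = 3 from rfl]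

theorem phi3 (w g : ℝ → ℝ) (x : Fin 3 → ℝ) :
    Phi (Fin.snoc ![fun _ : ℝ => (1:ℝ), w] g) x =
    Matrix.det !![1,1,1; w (x 0), w (x 1), w (x 2); g (x 0), g (x 1), g (x 2)] := by
  rw [Phi, Matrix.det_fin_three, Matrix.det_fin_three]
  simp only [Matrix.of_apply, Matrix.cons_val', Matrix.cons_val, Matrix.empty_val', Matrix.cons_val_fin_one]
  norm_num [Fin.snoc, Fin.castLT, Fin.castPred, show ((2:Fin 3):ℕ) = 2 from rfl]

theorem keyA (c0 s0 F0 c1 c2 c3 t1 t2 t3 g1 g2 g3 : ℝ) :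
    Matrix.det !![1,1,1,1; c0,c1,c2,c3;
      s0, t1*(c1-c0)+s0, t2*(c2-c0)+s0, t3*(c3-c0)+s0;
      F0, g1*(c1-c0)+F0, g2*(c2-c0)+F0, g3*(c3-c0)+F0] =
    ((c1-c0)*((c2-c0)*(c3-c0))) * Matrix.det !![1,1,1; t1,t2,t3; g1,g2,g3] := by
  rw [det_fin_four', Matrix.det_fin_three]
  simp only [Matrix.of_apply, Matrix.cons_val', Matrix.cons_val, Matrix.empty_val', Matrix.cons_val_fin_one]
  norm_num
  ring

theorem keyB (c0 s0 F0 c1 c2 c3 t1 t2 t3 g1 g2 g3 : ℝ) :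
    Matrix.det !![1,1,1,1; c1,c0,c2,c3;
      t1*(c1-c0)+s0, s0, t2*(c2-c0)+s0, t3*(c3-c0)+s0;
      g1*(c1-c0)+F0, F0, g2*(c2-c0)+F0, g3*(c3-c0)+F0] =
    ((c0-c1)*((c2-c0)*(c3-c0))) * Matrix.det !![1,1,1; t1,t2,t3; g1,g2,g3] := by
  rw [det_fin_four', Matrix.det_fin_three]
  simp only [Matrix.of_apply, Matrix.cons_val', Matrix.cons_val, Matrix.empty_val', Matrix.cons_val_fin_one]
  norm_num
  ring

theorem keyC (c0 s0 F0 c1 c2 c3 t1 t2 t3 g1 g2 g3 : ℝ) :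
    Matrix.det !![1,1,1,1; c1,c2,c0,c3;
      t1*(c1-c0)+s0, t2*(c2-c0)+s0, s0, t3*(c3-c0)+s0;
      g1*(c1-c0)+F0, g2*(c2-c0)+F0, F0, g3*(c3-c0)+F0] =
    ((c0-c1)*((c0-c2)*(c3-c0))) * Matrix.det !![1,1,1; t1,t2,t3; g1,g2,g3] := by
  rw [det_fin_four', Matrix.det_fin_three]
  simp only [Matrix.of_apply, Matrix.cons_val', Matrix.cons_val, Matrix.empty_val', Matrix.cons_val_fin_one]
  norm_num
  ring

theorem keyD (c0 s0 F0 c1 c2 c3 t1 t2 t3 g1 g2 g3 : ℝ) :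
    Matrix.det !![1,1,1,1; c1,c2,c3,c0;
      t1*(c1-c0)+s0, t2*(c2-c0)+s0, t3*(c3-c0)+s0, s0;
      g1*(c1-c0)+F0, g2*(c2-c0)+F0, g3*(c3-c0)+F0, F0] =
    ((c0-c1)*((c0-c2)*(c0-c3))) * Matrix.det !![1,1,1; t1,t2,t3; g1,g2,g3] := by
  rw [det_fin_four', Matrix.det_fin_three]
  simp only [Matrix.of_apply, Matrix.cons_val', Matrix.cons_val, Matrix.empty_val', Matrix.cons_val_fin_one]
  norm_num
  ring

theorem cos_lt_cos_H {x y : ℝ} (hx : x ∈ Set.Ioo (-π) 0) (hy : y ∈ Set.Ioo (-π) 0)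
    (hxy : x < y) : cos x < cos y := by
  have hm : sin ((y + x) / 2) < 0 :=
    sin_neg_of_neg_of_neg_pi_lt (by linarith [hx.2, hy.2]) (by linarith [hx.1, hy.1])
  have hd : 0 < sin ((y - x) / 2) :=
    sin_pos_of_pos_of_lt_pi (by linarith) (by linarith [pi_pos, hx.1, hy.2])
  nlinarith [Real.cos_sub_cos y x]

theorem w_eq {x₁ y : ℝ} (hx : x₁ ∈ Set.Ioo (-π) 0) (hy : y ∈ Set.Ioo (-π) 0)
    (hne : y ≠ x₁) :
    -Real.cot ((x₁ + y) / 2) = (sin y - sin x₁) / (cos y - cos x₁) := by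
  have hm : sin ((y + x₁) / 2) < 0 :=
    sin_neg_of_neg_of_neg_pi_lt (by linarith [hx.2, hy.2]) (by linarith [hx.1, hy.1])
  have hd : sin ((y - x₁) / 2) ≠ 0 := by
    rcases hne.lt_or_gt with h | h
    · exact (sin_neg_of_neg_of_neg_pi_lt (by linarith) (by linarith [pi_pos, hx.2, hy.1])).ne
    · exact (sin_pos_of_pos_of_lt_pi (by linarith) (by linarith [pi_pos, hx.1, hy.2])).ne'
  have hden : (-2 * sin ((y + x₁) / 2) * sin ((y - x₁) / 2)) ≠ 0 :=
    mul_ne_zero (mul_ne_zero (by norm_num) hm.ne) hd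
  rw [Real.cot_eq_cos_div_sin, Real.sin_sub_sin, Real.cos_sub_cos,
    show (x₁ + y) / 2 = (y + x₁) / 2 by ring, ← neg_div,
    div_eq_div_iff hm.ne hden]
  ring

theorem sm4 {a b c d : ℝ} (h1 : a < b) (h2 : b < c) (h3 : c < d) :
    StrictMono ![a,b,c,d] := by
  rw [Fin.strictMono_iff_lt_succ]
  intro i
  fin_cases i <;> simpa

theorem sm3 {a b c : ℝ} (h1 : a < b) (h2 : b < c) :
    StrictMono ![a,b,c] := by
  rw [Fin.strictMono_iff_lt_succ]
  intro i
  fin_cases i <;> simpa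

theorem mem4' {S : Set ℝ} {a b c d : ℝ} (ha : a ∈ S) (hb : b ∈ S) (hc : c ∈ S) (hd : d ∈ S) :
    ∀ i, ![a,b,c,d] i ∈ S := by
  intro i; fin_cases i <;> assumption

theorem mem3' {S : Set ℝ} {a b c : ℝ} (ha : a ∈ S) (hb : b ∈ S) (hc : c ∈ S) :
    ∀ i, ![a,b,c] i ∈ S := by
  intro i; fin_cases i <;> assumption

/-- Expressing `sin y` in terms of the divided-difference slope at `x₁`. -/
theorem sin_expand {x₁ y : ℝ} (h : cos y - cos x₁ ≠ 0) :
    sin y = (sin y - sin x₁) / (cos y - cos x₁) * (cos y - cos x₁) + sin x₁ := by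
  rw [div_mul_cancel₀ _ h]; ring

theorem f_expand (f : ℝ → ℝ) {x₁ y : ℝ} (h : cos y - cos x₁ ≠ 0) :
    f y = (f y - f x₁) / (cos y - cos x₁) * (cos y - cos x₁) + f x₁ := by
  rw [div_mul_cancel₀ _ h]; ring

/-- The Example: for `H = (-π, 0)` and `f : H → ℝ`, `f` is convex with respect to the
`3`-dimensional positive Chebyshev system `(1, cos, sin)` on `H` if and only if for each
`x₁ ∈ H` the function `x ↦ (f(x) - f(x₁)) / (cos x - cos x₁)` is convex on `H \ {x₁}` with
respect to the `2`-dimensional Chebyshev system `(1, -cot((x₁ + ·)/2))`. -/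
theorem trig_convexity_example (f : ℝ → ℝ) :
    IsConvexWRT ![fun _ : ℝ => (1 : ℝ), Real.cos, Real.sin] (Set.Ioo (-Real.pi) 0) f ↔
      ∀ x₁ ∈ Set.Ioo (-Real.pi) 0,
        IsConvexWRT ![fun _ : ℝ => (1 : ℝ), fun x : ℝ => -Real.cot ((x₁ + x) / 2)]
          (Set.Ioo (-Real.pi) 0 \ {x₁})
          (fun x : ℝ => (f x - f x₁) / (Real.cos x - Real.cos x₁)) := by
  constructor
  · intro h x₁ hx₁ y hy hmono
    obtain ⟨h0H, h0ne⟩ := hy 0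
    obtain ⟨h1H, h1ne⟩ := hy 1
    obtain ⟨h2H, h2ne⟩ := hy 2
    rw [Set.mem_singleton_iff] at h0ne h1ne h2ne
    have h01 : y 0 < y 1 := hmono (show (0:Fin 3) < 1 by decide)
    have h12 : y 1 < y 2 := hmono (show (1:Fin 3) < 2 by decide)
    rw [phi3]
    simp only [w_eq hx₁ h0H h0ne, w_eq hx₁ h1H h1ne, w_eq hx₁ h2H h2ne]
    rcases lt_trichotomy x₁ (y 0) with hc0 | hc0 | hc0
    · -- x₁ < y 0
      have e1 : cos x₁ < cos (y 0) := cos_lt_cos_H hx₁ h0H hc0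
      have e2 : cos x₁ < cos (y 1) := cos_lt_cos_H hx₁ h1H (by linarith)
      have e3 : cos x₁ < cos (y 2) := cos_lt_cos_H hx₁ h2H (by linarith)
      have h4 := h ![x₁, y 0, y 1, y 2] (mem4' hx₁ h0H h1H h2H) (sm4 hc0 h01 h12)
      rw [phi4] at h4
      norm_num at h4
      simp only [Matrix.cons_val] at h4
      rw [sin_expand (x₁ := x₁) (y := y 0) (by linarith),
        sin_expand (x₁ := x₁) (y := y 1) (by linarith),
        sin_expand (x₁ := x₁) (y := y 2) (by linarith),
        f_expand f (x₁ := x₁) (y := y 0) (by linarith),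
        f_expand f (x₁ := x₁) (y := y 1) (by linarith),
        f_expand f (x₁ := x₁) (y := y 2) (by linarith), keyA] at h4
      exact (mul_nonneg_iff_of_pos_left
        (mul_pos (by linarith) (mul_pos (by linarith) (by linarith)))).mp h4
    · exact absurd hc0.symm h0ne
    · rcases lt_trichotomy x₁ (y 1) with hc1 | hc1 | hc1
      · -- y 0 < x₁ < y 1
        have e1 : cos (y 0) < cos x₁ := cos_lt_cos_H h0H hx₁ hc0
        have e2 : cos x₁ < cos (y 1) := cos_lt_cos_H hx₁ h1H hc1
        have e3 : cos x₁ < cos (y 2) := cos_lt_cos_H hx₁ h2H (by linarith)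
        have h4 := h ![y 0, x₁, y 1, y 2] (mem4' h0H hx₁ h1H h2H) (sm4 hc0 hc1 h12)
        rw [phi4] at h4
        norm_num at h4
        simp only [Matrix.cons_val] at h4
        rw [sin_expand (x₁ := x₁) (y := y 0) (by linarith),
          sin_expand (x₁ := x₁) (y := y 1) (by linarith),
          sin_expand (x₁ := x₁) (y := y 2) (by linarith),
          f_expand f (x₁ := x₁) (y := y 0) (by linarith),
          f_expand f (x₁ := x₁) (y := y 1) (by linarith),
          f_expand f (x₁ := x₁) (y := y 2) (by linarith), keyB] at h4
        exact (mul_nonneg_iff_of_pos_left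
          (mul_pos (by linarith) (mul_pos (by linarith) (by linarith)))).mp h4
      · exact absurd hc1.symm h1ne
      · rcases lt_trichotomy x₁ (y 2) with hc2 | hc2 | hc2
        · -- y 1 < x₁ < y 2
          have e1 : cos (y 0) < cos x₁ := cos_lt_cos_H h0H hx₁ (by linarith)
          have e2 : cos (y 1) < cos x₁ := cos_lt_cos_H h1H hx₁ hc1
          have e3 : cos x₁ < cos (y 2) := cos_lt_cos_H hx₁ h2H hc2
          have h4 := h ![y 0, y 1, x₁, y 2] (mem4' h0H h1H hx₁ h2H) (sm4 h01 hc1 hc2)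
          rw [phi4] at h4
          norm_num at h4
          simp only [Matrix.cons_val] at h4
          rw [sin_expand (x₁ := x₁) (y := y 0) (by linarith),
            sin_expand (x₁ := x₁) (y := y 1) (by linarith),
            sin_expand (x₁ := x₁) (y := y 2) (by linarith),
            f_expand f (x₁ := x₁) (y := y 0) (by linarith),
            f_expand f (x₁ := x₁) (y := y 1) (by linarith),
            f_expand f (x₁ := x₁) (y := y 2) (by linarith), keyC] at h4
          exact (mul_nonneg_iff_of_pos_left
            (mul_pos (by linarith) (mul_pos (by linarith) (by linarith)))).mp h4
        · exact absurd hc2.symm h2ne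
        · -- y 2 < x₁
          have e1 : cos (y 0) < cos x₁ := cos_lt_cos_H h0H hx₁ (by linarith)
          have e2 : cos (y 1) < cos x₁ := cos_lt_cos_H h1H hx₁ (by linarith)
          have e3 : cos (y 2) < cos x₁ := cos_lt_cos_H h2H hx₁ hc2
          have h4 := h ![y 0, y 1, y 2, x₁] (mem4' h0H h1H h2H hx₁) (sm4 h01 h12 hc2)
          rw [phi4] at h4
          norm_num at h4
          simp only [Matrix.cons_val] at h4
          rw [sin_expand (x₁ := x₁) (y := y 0) (by linarith),
            sin_expand (x₁ := x₁) (y := y 1) (by linarith),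
            sin_expand (x₁ := x₁) (y := y 2) (by linarith),
            f_expand f (x₁ := x₁) (y := y 0) (by linarith),
            f_expand f (x₁ := x₁) (y := y 1) (by linarith),
            f_expand f (x₁ := x₁) (y := y 2) (by linarith), keyD] at h4
          exact (mul_nonneg_iff_of_pos_left
            (mul_pos (by linarith) (mul_pos (by linarith) (by linarith)))).mp h4
  · intro h x hx hmono
    have h01 : x 0 < x 1 := hmono (show (0:Fin 4) < 1 by decide)
    have h12 : x 1 < x 2 := hmono (show (1:Fin 4) < 2 by decide)
    have h23 : x 2 < x 3 := hmono (show (2:Fin 4) < 3 by decide)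
    have hne1 : x 1 ≠ x 0 := ne_of_gt h01
    have hne2 : x 2 ≠ x 0 := ne_of_gt (by linarith)
    have hne3 : x 3 ≠ x 0 := ne_of_gt (by linarith)
    have e1 : cos (x 0) < cos (x 1) := cos_lt_cos_H (hx 0) (hx 1) h01
    have e2 : cos (x 0) < cos (x 2) := cos_lt_cos_H (hx 0) (hx 2) (by linarith)
    have e3 : cos (x 0) < cos (x 3) := cos_lt_cos_H (hx 0) (hx 3) (by linarith)
    have h3 := h (x 0) (hx 0) ![x 1, x 2, x 3]
      (mem3' ⟨hx 1, hne1⟩ ⟨hx 2, hne2⟩ ⟨hx 3, hne3⟩) (sm3 h12 h23)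
    rw [phi3] at h3
    norm_num at h3
    simp only [Matrix.cons_val] at h3
    rw [w_eq (hx 0) (hx 1) hne1, w_eq (hx 0) (hx 2) hne2, w_eq (hx 0) (hx 3) hne3] at h3
    rw [phi4]
    rw [sin_expand (x₁ := x 0) (y := x 1) (by linarith),
      sin_expand (x₁ := x 0) (y := x 2) (by linarith),
      sin_expand (x₁ := x 0) (y := x 3) (by linarith),
      f_expand f (x₁ := x 0) (y := x 1) (by linarith),
      f_expand f (x₁ := x 0) (y := x 2) (by linarith),
      f_expand f (x₁ := x 0) (y := x 3) (by linarith), keyA]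
    exact mul_nonneg
      (le_of_lt (mul_pos (by linarith) (mul_pos (by linarith) (by linarith)))) h3
end

section
/- Let H ⊆ ℝ be an open interval, let n ∈ ℕ with n ≥ 2, let ω = (ω₁, …, ω_n) : H → ℝⁿ be an n-dimensional positive Chebyshev system over H such that ω_{⟨n−1⟩} is an (n−1)-dimensional positive Chebyshev system over H, and let f : H → ℝ. If there exist ω-convex functions g, h : H → ℝ with f = g − h, then for every subinterval [a, b] ⊆ H the ω-variation V^ω_{[a,b]}(f) is finite; moreover, for all a₁ < … < a_n = a and b = b₁ < … < b_n in H, one has V^ω_{[a,b]}(f) ≤ [b₁, …, b_n; g+h]_ω − [a₁, …, a_n; g+h]_ω. -/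
open Matrix

lemma det_row_eq_single {k : ℕ} (M : Matrix (Fin (k+1)) (Fin (k+1)) ℝ) (r j₀ : Fin (k+1))
    (h : ∀ j, j ≠ j₀ → M r j = 0) :
    M.det = (-1)^((r:ℕ)+(j₀:ℕ)) * M r j₀ * (M.submatrix r.succAbove j₀.succAbove).det := by
  rw [det_succ_row M r, Finset.sum_eq_single j₀]
  · intro j _ hj
    rw [h j hj]; ring
  · intro hmem; exact absurd (Finset.mem_univ _) hmem

lemma det_updateRow_add_sum {s : ℕ} {ι : Type*} (M : Matrix (Fin s) (Fin s) ℝ) (j : Fin s)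
    (T : Finset ι) (ρ : ι → Fin s) (hj : ∀ i ∈ T, ρ i ≠ j) (c : ι → ℝ) (v : Fin s → ℝ) :
    (M.updateRow j (v + ∑ i ∈ T, c i • M (ρ i))).det = (M.updateRow j v).det := by
  classical
  induction T using Finset.induction_on with
  | empty => simp
  | @insert a T' hmem ih =>
    rw [Finset.sum_insert hmem,
      show v + (c a • M (ρ a) + ∑ i ∈ T', c i • M (ρ i))
        = (v + ∑ i ∈ T', c i • M (ρ i)) + c a • M (ρ a) by abel,
      det_updateRow_add, det_updateRow_smul,
      det_updateRow_eq_zero (hj a (Finset.mem_insert_self a T')),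
      mul_zero, add_zero, ih (fun i hi => hj i (Finset.mem_insert_of_mem hi))]

lemma num_eq_updateRow {k : ℕ} (ω : Fin (k+1) → ℝ → ℝ) (φ : ℝ → ℝ) (x : Fin (k+1) → ℝ) :
    Phi (fun i => if (i : ℕ) + 1 = k + 1 then φ else ω i) x
      = ((Matrix.of fun i j => ω i (x j)).updateRow (Fin.last k) (fun j => φ (x j))).det := by
  unfold Phi
  congr 1
  ext i j
  by_cases hi : i = Fin.last k
  · subst hi
    simp [Fin.val_last]
  · have h1 : (i : ℕ) + 1 ≠ k + 1 := by
      have := Fin.val_lt_last hi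
      omega
    rw [Matrix.updateRow_ne hi]
    show (if (i:ℕ) + 1 = k + 1 then φ else ω i) (x j) = ω i (x j)
    rw [if_neg h1]

lemma shift_mono {k : ℕ} {H : Set ℝ} (ω : Fin (k+2) → ℝ → ℝ)
    (hω : IsPosChebyshev ω H)
    (hω' : IsPosChebyshev (fun i : Fin (k+1) => ω ⟨(i : ℕ), by omega⟩) H)
    (g : ℝ → ℝ) (hg : IsConvexWRT ω H g)
    (z : Fin (k+2+1) → ℝ) (hzH : ∀ i, z i ∈ H) (hz : StrictMono z) :
    divDiff ω g (fun t => z t.castSucc) ≤ divDiff ω g (fun t => z t.succ) := by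
  -- abbreviations
  set zinit : Fin (k+2) → ℝ := fun t => z t.castSucc with hzinit
  set ztail : Fin (k+2) → ℝ := fun t => z t.succ with hztail
  set zmid : Fin (k+1) → ℝ := fun j => z ⟨(j : ℕ) + 1, by omega⟩ with hzmid
  set ω' : Fin (k+1) → ℝ → ℝ := fun i => ω ⟨(i : ℕ), by omega⟩ with hω'def
  have hzmid_mono : StrictMono zmid := by
    intro a b hab
    exact hz (by simp only [Fin.mk_lt_mk]; exact Nat.succ_lt_succ hab)
  have hzmid_mem : ∀ j, zmid j ∈ H := fun j => hzH _
  have hP : 0 < Phi ω' zmid := hω' zmid hzmid_mem hzmid_mono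
  have hzinit_mono : StrictMono zinit := by
    intro a b hab
    exact hz (by simpa using hab)
  have hztail_mono : StrictMono ztail := by
    intro a b hab
    exact hz (by simpa using hab)
  have hΦi : 0 < Phi ω zinit := hω zinit (fun i => hzH _) hzinit_mono
  have hΦt : 0 < Phi ω ztail := hω ztail (fun i => hzH _) hztail_mono
  -- the interpolation coefficients
  set W : Matrix (Fin (k+1)) (Fin (k+1)) ℝ := Matrix.of fun i j => ω' i (zmid j) with hWdef
  have hWdet : W.det = Phi ω' zmid := rfl
  have hWunit : IsUnit (W.transpose).det := by
    rw [Matrix.det_transpose, hWdet]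
    exact (hP.ne').isUnit
  set c : Fin (k+1) → ℝ := (W.transpose)⁻¹.mulVec (fun j => g (zmid j)) with hcdef
  have hc : ∀ j, (∑ i, c i * ω' i (zmid j)) = g (zmid j) := by
    have h1 : (W.transpose).mulVec c = fun j => g (zmid j) := by
      rw [hcdef, Matrix.mulVec_mulVec, Matrix.mul_nonsing_inv _ hWunit, Matrix.one_mulVec]
    intro j
    have := congrFun h1 j
    rw [Matrix.mulVec, dotProduct] at this
    rw [← this]
    refine Finset.sum_congr rfl fun i _ => ?_
    show c i * ω' i (zmid j) = ω' i (zmid j) * c i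
    ring
  set p : ℝ → ℝ := fun t => ∑ i, c i * ω' i t with hpdef
  set e : ℝ → ℝ := fun t => g t - p t with hedef
  have he0 : ∀ j, e (zmid j) = 0 := by
    intro j
    simp only [hedef, hpdef, sub_eq_zero]
    exact (hc j).symm
  -- numerators written via updateRow
  have hnum : ∀ (x : Fin (k+2) → ℝ) (φ : ℝ → ℝ),
      Phi (fun i => if (i : ℕ) + 1 = k + 2 then φ else ω i) x
        = ((Matrix.of fun i j => ω i (x j)).updateRow (Fin.last (k+1)) (fun j => φ (x j))).det :=
    fun x φ => num_eq_updateRow ω φ x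
  -- replacing `g` by `e` in numerators
  have hnum_e : ∀ (x : Fin (k+2) → ℝ),
      Phi (fun i => if (i : ℕ) + 1 = k + 2 then g else ω i) x
        = ((Matrix.of fun i j => ω i (x j)).updateRow (Fin.last (k+1))
            (fun j => e (x j))).det := by
    intro x
    rw [hnum x g]
    have hrow : (fun j => g (x j))
        = (fun j => e (x j)) + ∑ i : Fin (k+1),
            c i • (Matrix.of fun i' j => ω i' (x j)) ⟨(i : ℕ), by omega⟩ := by
      funext j
      simp only [Pi.add_apply, Finset.sum_apply, Pi.smul_apply, smul_eq_mul, Matrix.of_apply]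
      have hp : (∑ i : Fin (k+1), c i * ω ⟨(i : ℕ), by omega⟩ (x j)) = p (x j) := rfl
      rw [hp]
      show g (x j) = (g (x j) - p (x j)) + p (x j)
      ring
    rw [hrow, det_updateRow_add_sum _ _ Finset.univ
      (fun i : Fin (k+1) => (⟨(i : ℕ), by omega⟩ : Fin (k+2)))
      (fun i _ => by
        intro hEq
        have := congrArg Fin.val hEq
        simp [Fin.val_last] at this
        omega) c _]
  -- the initial-window numerator
  have hNinit : Phi (fun i => if (i : ℕ) + 1 = k + 2 then g else ω i) zinit
      = (-1)^(k+1) * e (z 0) * Phi ω' zmid := by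
    rw [hnum_e zinit]
    have hrz : ∀ j : Fin (k+2), j ≠ (0 : Fin (k+2)) →
        ((Matrix.of fun i j => ω i (zinit j)).updateRow (Fin.last (k+1))
          (fun j => e (zinit j))) (Fin.last (k+1)) j = 0 := by
      intro j hj
      rw [Matrix.updateRow_self]
      have hj0 : 0 < (j : ℕ) := Nat.pos_of_ne_zero (fun h0 => hj (Fin.ext (by simp [h0])))
      have hzj : zinit j = zmid ⟨(j : ℕ) - 1, by have := j.isLt; omega⟩ := by
        refine congrArg z (Fin.ext ?_)
        simp
        omega
      rw [hzj, he0]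
    rw [det_row_eq_single _ (Fin.last (k+1)) (0 : Fin (k+2)) hrz]
    have hsub : ((Matrix.of fun i j => ω i (zinit j)).updateRow (Fin.last (k+1))
          (fun j => e (zinit j))).submatrix (Fin.last (k+1)).succAbove
          (0 : Fin (k+2)).succAbove
        = (Matrix.of fun i j => ω' i (zmid j)) := by
      ext i j
      simp only [Matrix.submatrix_apply, Fin.succAbove_last, Fin.zero_succAbove]
      rw [Matrix.updateRow_ne (Fin.castSucc_lt_last i).ne, Matrix.of_apply, Matrix.of_apply]
      show ω i.castSucc (z (Fin.castSucc j.succ)) = ω' i (zmid j)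
      have h1 : (i.castSucc : Fin (k+2)) = ⟨(i : ℕ), by omega⟩ := rfl
      have h2 : z (Fin.castSucc j.succ) = zmid j := by
        refine congrArg z (Fin.ext ?_)
        simp
      rw [h1, h2]
    rw [hsub]
    have hval : ((Matrix.of fun i j => ω i (zinit j)).updateRow (Fin.last (k+1))
        (fun j => e (zinit j))) (Fin.last (k+1)) (0 : Fin (k+2)) = e (z 0) := by
      rw [Matrix.updateRow_self]
      rfl
    rw [hval]
    show (-1 : ℝ)^((k+1) + (0:ℕ)) * e (z 0) * Phi ω' zmid = _
    norm_num
  -- the shifted-window numerator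
  have hNtail : Phi (fun i => if (i : ℕ) + 1 = k + 2 then g else ω i) ztail
      = e (z (Fin.last (k+2))) * Phi ω' zmid := by
    rw [hnum_e ztail]
    have hrz : ∀ j : Fin (k+2), j ≠ Fin.last (k+1) →
        ((Matrix.of fun i j => ω i (ztail j)).updateRow (Fin.last (k+1))
          (fun j => e (ztail j))) (Fin.last (k+1)) j = 0 := by
      intro j hj
      rw [Matrix.updateRow_self]
      have hjlt : (j : ℕ) < k + 1 := Fin.val_lt_last hj
      have hzj : ztail j = zmid ⟨(j : ℕ), hjlt⟩ := by
        refine congrArg z (Fin.ext ?_)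
        simp
      rw [hzj, he0]
    rw [det_row_eq_single _ (Fin.last (k+1)) (Fin.last (k+1)) hrz]
    have hsub : ((Matrix.of fun i j => ω i (ztail j)).updateRow (Fin.last (k+1))
          (fun j => e (ztail j))).submatrix (Fin.last (k+1)).succAbove
          (Fin.last (k+1)).succAbove
        = (Matrix.of fun i j => ω' i (zmid j)) := by
      ext i j
      simp only [Matrix.submatrix_apply, Fin.succAbove_last]
      rw [Matrix.updateRow_ne (Fin.castSucc_lt_last i).ne, Matrix.of_apply, Matrix.of_apply]
      show ω i.castSucc (z (Fin.castSucc j).succ) = ω' i (zmid j)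
      have h1 : (i.castSucc : Fin (k+2)) = ⟨(i : ℕ), by omega⟩ := rfl
      have h2 : z (Fin.castSucc j).succ = zmid j := by
        refine congrArg z (Fin.ext ?_)
        simp
      rw [h1, h2]
    rw [hsub]
    have hval : ((Matrix.of fun i j => ω i (ztail j)).updateRow (Fin.last (k+1))
        (fun j => e (ztail j))) (Fin.last (k+1)) (Fin.last (k+1)) = e (z (Fin.last (k+2))) := by
      rw [Matrix.updateRow_self]
      refine congrArg e (congrArg z (Fin.ext ?_))
      simp
    rw [hval]
    have heven : ((-1 : ℝ))^(((Fin.last (k+1) : ℕ)) + ((Fin.last (k+1) : ℕ))) = 1 :=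
      Even.neg_one_pow ⟨(k+1), by simp [Fin.val_last]⟩
    rw [heven, one_mul]
    rfl
  -- convexity expansion
  have hS0 : 0 ≤ Phi (Fin.snoc ω g) z := hg z hzH hz
  have hSval : Phi (Fin.snoc ω g) z
      = (-1)^(k+2) * e (z 0) * Phi ω ztail + e (z (Fin.last (k+2))) * Phi ω zinit := by
    have ωg : Fin (k+2+1) → ℝ → ℝ := Fin.snoc ω g
    set Bz : Matrix (Fin (k+2+1)) (Fin (k+2+1)) ℝ :=
      Matrix.of fun i j => (Fin.snoc ω g : Fin (k+2+1) → ℝ → ℝ) i (z j) with hBzdef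
    have hBz1 : Bz = Bz.updateRow (Fin.last (k+2)) (fun j => g (z j)) := by
      ext i j
      by_cases hi : i = Fin.last (k+2)
      · subst hi
        rw [Matrix.updateRow_self, hBzdef, Matrix.of_apply, Fin.snoc_last]
      · rw [Matrix.updateRow_ne hi]
    have step1 : Phi (Fin.snoc ω g) z
        = (Bz.updateRow (Fin.last (k+2)) (fun j => g (z j))).det := by
      rw [← hBz1]
      rfl
    rw [step1]
    have hrow : (fun j => g (z j))
        = (fun j => e (z j)) + ∑ i : Fin (k+1),
            c i • Bz ⟨(i : ℕ), by omega⟩ := by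
      funext j
      simp only [Pi.add_apply, Finset.sum_apply, Pi.smul_apply, smul_eq_mul, hBzdef,
        Matrix.of_apply]
      have hsn : ∀ i : Fin (k+1),
          (Fin.snoc ω g : Fin (k+2+1) → ℝ → ℝ) (⟨(i : ℕ), by omega⟩ : Fin (k+2+1)) (z j)
          = ω' i (z j) := by
        intro i
        show (Fin.snoc ω g : Fin (k+2+1) → ℝ → ℝ)
          (Fin.castSucc (⟨(i : ℕ), by omega⟩ : Fin (k+2))) (z j) = ω' i (z j)
        rw [Fin.snoc_castSucc]
      simp only [hsn]
      have hp : (∑ i : Fin (k+1), c i * ω' i (z j)) = p (z j) := rfl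
      rw [hp]
      show g (z j) = (g (z j) - p (z j)) + p (z j)
      ring
    rw [hrow, det_updateRow_add_sum _ _ Finset.univ
      (fun i : Fin (k+1) => (⟨(i : ℕ), by omega⟩ : Fin (k+2+1)))
      (fun i _ => by
        intro hEq
        have := congrArg Fin.val hEq
        simp [Fin.val_last] at this
        omega) c _]
    -- split the `e` row into the two boundary contributions
    set u : Fin (k+2+1) → ℝ := fun j => if j = 0 then e (z 0) else 0 with hudef
    set w : Fin (k+2+1) → ℝ := fun j => if j = Fin.last (k+2) then e (z (Fin.last (k+2))) else 0
      with hwdef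
    have hew : (fun j => e (z j)) = u + w := by
      funext j
      simp only [Pi.add_apply, hudef, hwdef]
      by_cases hj0 : j = 0
      · subst hj0
        rw [if_pos rfl, if_neg (by intro hEq; have := congrArg Fin.val hEq; simp at this)]
        ring
      · by_cases hjl : j = Fin.last (k+2)
        · subst hjl
          rw [if_neg hj0, if_pos rfl]
          ring
        · rw [if_neg hj0, if_neg hjl]
          have hj1 : 1 ≤ (j : ℕ) := Nat.pos_of_ne_zero (fun h0 => hj0 (Fin.ext (by simp [h0])))
          have hj2 : (j : ℕ) < k + 2 := by
            have := j.isLt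
            rcases Nat.lt_or_ge (j : ℕ) (k+2) with h | h
            · exact h
            · exact absurd (Fin.ext (by simp [Fin.val_last]; omega)) hjl
          have hzj : z j = zmid ⟨(j : ℕ) - 1, by omega⟩ := by
            refine congrArg z (Fin.ext ?_)
            simp
            omega
          rw [hzj, he0]
          ring
    rw [hew, Matrix.det_updateRow_add]
    -- the `u` part
    have hu0 : ∀ j : Fin (k+2+1), j ≠ (0 : Fin (k+2+1)) →
        (Bz.updateRow (Fin.last (k+2)) u) (Fin.last (k+2)) j = 0 := by
      intro j hj
      rw [Matrix.updateRow_self, hudef]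
      exact if_neg hj
    rw [det_row_eq_single _ (Fin.last (k+2)) (0 : Fin (k+2+1)) hu0]
    -- the `w` part
    have hw0 : ∀ j : Fin (k+2+1), j ≠ Fin.last (k+2) →
        (Bz.updateRow (Fin.last (k+2)) w) (Fin.last (k+2)) j = 0 := by
      intro j hj
      rw [Matrix.updateRow_self, hwdef]
      exact if_neg hj
    rw [det_row_eq_single _ (Fin.last (k+2)) (Fin.last (k+2)) hw0]
    have hsubU : (Bz.updateRow (Fin.last (k+2)) u).submatrix
          (Fin.last (k+2)).succAbove (0 : Fin (k+2+1)).succAbove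
        = (Matrix.of fun i j => ω i (ztail j)) := by
      ext i j
      simp only [Matrix.submatrix_apply, Fin.succAbove_last, Fin.zero_succAbove]
      rw [Matrix.updateRow_ne (Fin.castSucc_lt_last i).ne, hBzdef, Matrix.of_apply,
        Fin.snoc_castSucc]
      rfl
    have hsubW : (Bz.updateRow (Fin.last (k+2)) w).submatrix
          (Fin.last (k+2)).succAbove (Fin.last (k+2)).succAbove
        = (Matrix.of fun i j => ω i (zinit j)) := by
      ext i j
      simp only [Matrix.submatrix_apply, Fin.succAbove_last]
      rw [Matrix.updateRow_ne (Fin.castSucc_lt_last i).ne, hBzdef, Matrix.of_apply,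
        Fin.snoc_castSucc]
      rfl
    rw [hsubU, hsubW]
    have hvalU : (Bz.updateRow (Fin.last (k+2)) u)
        (Fin.last (k+2)) (0 : Fin (k+2+1)) = e (z 0) := by
      rw [Matrix.updateRow_self, hudef]
      exact if_pos rfl
    have hvalW : (Bz.updateRow (Fin.last (k+2)) w)
        (Fin.last (k+2)) (Fin.last (k+2)) = e (z (Fin.last (k+2))) := by
      rw [Matrix.updateRow_self, hwdef]
      exact if_pos rfl
    rw [hvalU, hvalW]
    have heven : ((-1 : ℝ))^(((Fin.last (k+2) : ℕ)) + ((Fin.last (k+2) : ℕ))) = 1 :=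
      Even.neg_one_pow ⟨(k+2), by simp [Fin.val_last]⟩
    rw [heven, one_mul]
    show (-1 : ℝ)^((k+2) + (0:ℕ)) * e (z 0) * Phi ω ztail + e (z (Fin.last (k+2))) * Phi ω zinit
        = _
    norm_num
  -- final algebra
  show Phi (fun i => if (i : ℕ) + 1 = k + 2 then g else ω i) zinit / Phi ω zinit
      ≤ Phi (fun i => if (i : ℕ) + 1 = k + 2 then g else ω i) ztail / Phi ω ztail
  rw [div_le_div_iff₀ hΦi hΦt, hNinit, hNtail]
  have key : 0 ≤ Phi ω' zmid * Phi (Fin.snoc ω g) z := mul_nonneg hP.le hS0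
  rw [hSval] at key
  have hpow : ((-1 : ℝ))^(k+2) = -(-1 : ℝ)^(k+1) := by
    rw [pow_succ]; ring
  rw [hpow] at key
  nlinarith [key]


lemma divDiff_add {k : ℕ} (ω : Fin (k+1) → ℝ → ℝ) (F G : ℝ → ℝ) (x : Fin (k+1) → ℝ) :
    divDiff ω (fun t => F t + G t) x = divDiff ω F x + divDiff ω G x := by
  unfold divDiff
  rw [num_eq_updateRow, num_eq_updateRow, num_eq_updateRow,
    show (fun j => (fun t => F t + G t) (x j)) = (fun j => F (x j)) + (fun j => G (x j)) from rfl,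
    Matrix.det_updateRow_add, add_div]

lemma divDiff_smul {k : ℕ} (ω : Fin (k+1) → ℝ → ℝ) (s : ℝ) (F : ℝ → ℝ) (x : Fin (k+1) → ℝ) :
    divDiff ω (fun t => s * F t) x = s * divDiff ω F x := by
  unfold divDiff
  rw [num_eq_updateRow, num_eq_updateRow,
    show (fun j => (fun t => s * F t) (x j)) = s • (fun j => F (x j)) from rfl,
    Matrix.det_updateRow_smul, mul_div_assoc]

lemma divDiff_sub {k : ℕ} (ω : Fin (k+1) → ℝ → ℝ) (F G : ℝ → ℝ) (x : Fin (k+1) → ℝ) :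
    divDiff ω (fun t => F t - G t) x = divDiff ω F x - divDiff ω G x := by
  have h1 : (fun t => F t - G t) = fun t => F t + (-1 : ℝ) * G t := by
    funext t; ring
  rw [h1, divDiff_add, divDiff_smul]
  ring

lemma divDiff_congr {k : ℕ} (ω : Fin (k+1) → ℝ → ℝ) (F G : ℝ → ℝ) (x : Fin (k+1) → ℝ)
    (hFG : ∀ j, F (x j) = G (x j)) : divDiff ω F x = divDiff ω G x := by
  unfold divDiff
  rw [num_eq_updateRow, num_eq_updateRow,
    show (fun j => F (x j)) = (fun j => G (x j)) from funext hFG]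

lemma window_step {k : ℕ} {H : Set ℝ} (ω : Fin (k+2) → ℝ → ℝ)
    (hω : IsPosChebyshev ω H)
    (hω' : IsPosChebyshev (fun i : Fin (k+1) => ω ⟨(i : ℕ), by omega⟩) H)
    (g : ℝ → ℝ) (hg : IsConvexWRT ω H g)
    (u : ℕ → ℝ) (L : ℕ) (hmono : ∀ s, s < L → u s < u (s+1)) (hmem : ∀ s, s ≤ L → u s ∈ H)
    (i : ℕ) (hi : i + (k+2) ≤ L) :
    divDiff ω g (fun t : Fin (k+2) => u (i + (t : ℕ)))
      ≤ divDiff ω g (fun t : Fin (k+2) => u (i + 1 + (t : ℕ))) := by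
  have humono : ∀ d a : ℕ, a + d ≤ L → 0 < d → u a < u (a + d) := by
    intro d
    induction d with
    | zero => intro a _ hd; omega
    | succ d ih =>
      intro a haL hd
      rcases Nat.eq_zero_or_pos d with hd0 | hd0
      · subst hd0
        exact hmono a (by omega)
      · have h3 : u (a + d) < u (a + d + 1) := hmono (a + d) (by omega)
        have heq : a + d + 1 = a + (d + 1) := by omega
        rw [heq] at h3
        exact lt_trans (ih a (by omega) hd0) h3
  set z : Fin (k+2+1) → ℝ := fun s => u (i + (s : ℕ)) with hzdef
  have h1 : (fun t : Fin (k+2) => u (i + (t : ℕ))) = fun t => z t.castSucc := by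
    funext t
    refine congrArg u ?_
    simp
  have h2 : (fun t : Fin (k+2) => u (i + 1 + (t : ℕ))) = fun t => z t.succ := by
    funext t
    refine congrArg u ?_
    simp only [Fin.val_succ]
    omega
  have hzH : ∀ s, z s ∈ H := fun s => hmem _ (by have := s.isLt; omega)
  have hzmono : StrictMono z := by
    intro s t hst
    have hst' : (s : ℕ) < (t : ℕ) := hst
    have := humono ((t : ℕ) - (s : ℕ)) (i + (s : ℕ)) (by have := t.isLt; omega) (by omega)
    have heq : i + (s : ℕ) + ((t : ℕ) - (s : ℕ)) = i + (t : ℕ) := by omega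
    rw [heq] at this
    exact this
  rw [h1, h2]
  exact shift_mono ω hω hω' g hg z hzH hzmono

lemma window_mono {k : ℕ} {H : Set ℝ} (ω : Fin (k+2) → ℝ → ℝ)
    (hω : IsPosChebyshev ω H)
    (hω' : IsPosChebyshev (fun i : Fin (k+1) => ω ⟨(i : ℕ), by omega⟩) H)
    (g : ℝ → ℝ) (hg : IsConvexWRT ω H g)
    (u : ℕ → ℝ) (L : ℕ) (hmono : ∀ s, s < L → u s < u (s+1)) (hmem : ∀ s, s ≤ L → u s ∈ H)
    (i j : ℕ) (hij : i ≤ j) (hj : j + (k+1) ≤ L) :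
    divDiff ω g (fun t : Fin (k+2) => u (i + (t : ℕ)))
      ≤ divDiff ω g (fun t : Fin (k+2) => u (j + (t : ℕ))) := by
  induction j, hij using Nat.le_induction with
  | base => exact le_refl _
  | succ j hij ih =>
    exact le_trans (ih (by omega))
      (window_step ω hω hω' g hg u L hmono hmem j (by omega))


open scoped ENNReal

/-- The `ω`-variation `V^ω_{[a,b]}(f)`: the supremum, over all partitions
`a = x₀ < x₁ < … < x_m = b` with `m ≥ n`, of
`∑_{i=0}^{m-n} |[x_{i+1},…,x_{i+n}; f]_ω - [x_i,…,x_{i+n-1}; f]_ω|`, valued in `[0, ∞]`. -/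
noncomputable def omegaVar {n : ℕ} (ω : Fin n → ℝ → ℝ) (f : ℝ → ℝ) (a b : ℝ) : ℝ≥0∞ :=
  ⨆ (m : ℕ) (_ : n ≤ m) (x : Fin (m + 1) → ℝ) (_ : StrictMono x) (_ : x 0 = a)
      (_ : x (Fin.last m) = b),
    ∑ i : Fin (m - n + 1),
      ENNReal.ofReal
        |divDiff ω f (fun t : Fin n =>
            x ⟨(i : ℕ) + 1 + (t : ℕ), by have := i.isLt; have := t.isLt; omega⟩)
          - divDiff ω f (fun t : Fin n =>
            x ⟨(i : ℕ) + (t : ℕ), by have := i.isLt; have := t.isLt; omega⟩)|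

/-- Theorem 3: if `f = g - h` with `g, h` `ω`-convex on the open interval `H`, then for every
`[a,b] ⊆ H` the `ω`-variation `V^ω_{[a,b]}(f)` is finite; moreover, for all
`a₁ < … < a_n = a` and `b = b₁ < … < b_n` in `H`,
`V^ω_{[a,b]}(f) ≤ [b₁,…,b_n; g+h]_ω - [a₁,…,a_n; g+h]_ω`. -/
theorem variation_of_difference_of_omega_convex (H : Set ℝ) (hHopen : IsOpen H)
    (hHconn : H.OrdConnected) (n : ℕ) (hn : 2 ≤ n)
    (ω : Fin n → ℝ → ℝ)
    (hω : IsPosChebyshev ω H)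
    (hω' : IsPosChebyshev (fun i : Fin (n - 1) => ω (Fin.castLE (by omega) i)) H)
    (f g h : ℝ → ℝ)
    (hg : IsConvexWRT ω H g) (hh : IsConvexWRT ω H h)
    (hf : ∀ t ∈ H, f t = g t - h t) :
    ∀ a b : ℝ, a < b → Set.Icc a b ⊆ H →
      omegaVar ω f a b ≠ ⊤ ∧
      ∀ A B : Fin n → ℝ, (∀ i, A i ∈ H) → (∀ i, B i ∈ H) →
        StrictMono A → StrictMono B →
        A ⟨n - 1, by omega⟩ = a → B ⟨0, by omega⟩ = b →
        omegaVar ω f a b ≤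
          ENNReal.ofReal
            (divDiff ω (fun t => g t + h t) B - divDiff ω (fun t => g t + h t) A) := by
  obtain ⟨k, rfl⟩ : ∃ k, n = k + 2 := ⟨n - 2, by omega⟩
  have hω'' : IsPosChebyshev (fun i : Fin (k+1) => ω ⟨(i : ℕ), by omega⟩) H := hω'
  intro a b hab hsub
  have haH : a ∈ H := hsub ⟨le_refl a, hab.le⟩
  have hbH : b ∈ H := hsub ⟨hab.le, le_refl b⟩
  set G : ℝ → ℝ := fun t => g t + h t with hGdef
  have main : ∀ A B : Fin (k+2) → ℝ, (∀ i, A i ∈ H) → (∀ i, B i ∈ H) →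
      StrictMono A → StrictMono B →
      A ⟨k + 2 - 1, by omega⟩ = a → B ⟨0, by omega⟩ = b →
      omegaVar ω f a b ≤ ENNReal.ofReal (divDiff ω G B - divDiff ω G A) := by
    intro A B hAH hBH hAm hBm hAa hBb
    simp only [omegaVar]
    refine iSup_le fun m => iSup_le fun hm => iSup_le fun x => iSup_le fun hx =>
      iSup_le fun hx0 => iSup_le fun hxl => ?_
    have hax : ∀ i, a ≤ x i := fun i => hx0 ▸ hx.monotone (Fin.zero_le i)
    have hxb : ∀ i, x i ≤ b := fun i => hxl ▸ hx.monotone (Fin.le_last i)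
    have hxH : ∀ i, x i ∈ H := fun i => hsub ⟨hax i, hxb i⟩
    set L : ℕ := m + 2 * (k + 1) with hLdef
    set u : ℕ → ℝ := fun s =>
      if h1 : s < k + 1 then A ⟨s, by omega⟩
      else if h2 : s ≤ k + 1 + m then x ⟨s - (k + 1), by omega⟩
      else B ⟨min (s - (k + 1) - m) (k + 1), by omega⟩ with hudef
    have huA : ∀ (s : ℕ) (hs : s < k + 1), u s = A ⟨s, by omega⟩ := by
      intro s hs; simp only [hudef]; rw [dif_pos hs]
    have hux : ∀ (s : ℕ) (h1 : k + 1 ≤ s) (h2 : s ≤ k + 1 + m),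
        u s = x ⟨s - (k + 1), by omega⟩ := by
      intro s h1 h2; simp only [hudef]; rw [dif_neg (by omega), dif_pos h2]
    have huB : ∀ (s : ℕ) (h1 : k + 1 + m < s) (h2 : s ≤ L),
        u s = B ⟨s - (k + 1) - m, by omega⟩ := by
      intro s h1 h2; simp only [hudef]
      rw [dif_neg (by omega), dif_neg (by omega)]
      refine congrArg B (Fin.ext ?_)
      show min (s - (k + 1) - m) (k + 1) = s - (k + 1) - m
      omega
    have hx0' : ∀ (pf : 0 < m + 1), x ⟨0, pf⟩ = a := by
      intro pf
      rw [← hx0]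
      exact congrArg x (Fin.ext (by simp))
    have hxl' : ∀ (pf : m < m + 1), x ⟨m, pf⟩ = b := by
      intro pf
      rw [← hxl]
      exact congrArg x (Fin.ext (by simp))
    have hub0 : u (k + 1) = a := by
      rw [hux (k+1) (le_refl _) (by omega)]
      have he : (⟨k + 1 - (k + 1), by omega⟩ : Fin (m+1)) = ⟨0, by omega⟩ :=
        Fin.ext (by show k + 1 - (k+1) = 0; omega)
      rw [he, hx0']
    have hubm : u (k + 1 + m) = b := by
      rw [hux (k+1+m) (by omega) (le_refl _)]
      have he : (⟨k + 1 + m - (k + 1), by omega⟩ : Fin (m+1)) = ⟨m, by omega⟩ :=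
        Fin.ext (by show k + 1 + m - (k+1) = m; omega)
      rw [he, hxl']
    have humem : ∀ s, s ≤ L → u s ∈ H := by
      intro s hs
      rcases Nat.lt_or_ge s (k+1) with h1 | h1
      · rw [huA s h1]; exact hAH _
      rcases le_or_gt s (k+1+m) with h2 | h2
      · rw [hux s h1 h2]; exact hxH _
      · rw [huB s h2 hs]; exact hBH _
    have humono : ∀ s, s < L → u s < u (s + 1) := by
      intro s hsL
      rcases (by omega : s + 1 < k + 1 ∨ s + 1 = k + 1 ∨
          (k + 1 ≤ s ∧ s + 1 ≤ k + 1 + m) ∨ s = k + 1 + m ∨ k + 1 + m < s) with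
        h1 | h1 | ⟨h1, h2⟩ | h1 | h1
      · rw [huA s (by omega), huA (s+1) h1]
        exact hAm (Fin.mk_lt_mk.mpr (by omega))
      · have hu1 : u (s+1) = a := by rw [h1]; exact hub0
        rw [huA s (by omega), hu1, ← hAa]
        exact hAm (Fin.mk_lt_mk.mpr (by omega))
      · rw [hux s h1 (by omega), hux (s+1) (by omega) h2]
        exact hx (Fin.mk_lt_mk.mpr (by omega))
      · have hu0 : u s = b := by rw [h1]; exact hubm
        have hu1 : u (s+1) = B ⟨1, by omega⟩ := by
          rw [huB (s+1) (by omega) (by omega)]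
          exact congrArg B (Fin.ext (by show s + 1 - (k+1) - m = 1; omega))
        rw [hu0, hu1, ← hBb]
        exact hBm (Fin.mk_lt_mk.mpr (by omega))
      · rw [huB s h1 (by omega), huB (s+1) (by omega) (by omega)]
        exact hBm (Fin.mk_lt_mk.mpr (by omega))
    -- the endpoint windows
    have hDA : (fun t : Fin (k+2) => u (0 + (t : ℕ))) = A := by
      funext t
      rcases Nat.lt_or_ge (t : ℕ) (k+1) with h1 | h1
      · rw [show 0 + (t : ℕ) = (t : ℕ) by omega, huA _ h1]
      · have ht : (t : ℕ) = k + 1 := by have := t.isLt; omega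
        rw [show 0 + (t : ℕ) = k + 1 by omega, hub0, ← hAa]
        exact congrArg A (Fin.ext (by show k + 2 - 1 = (t : ℕ); omega))
    have hDB : (fun t : Fin (k+2) => u (k + 1 + m + (t : ℕ))) = B := by
      funext t
      rcases Nat.eq_zero_or_pos (t : ℕ) with h1 | h1
      · rw [show k + 1 + m + (t : ℕ) = k + 1 + m by omega, hubm, ← hBb]
        exact congrArg B (Fin.ext (by show (0:ℕ) = (t : ℕ); omega))
      · rw [huB _ (by omega) (by have := t.isLt; omega)]
        exact congrArg B (Fin.ext (by
          show k + 1 + m + (t : ℕ) - (k+1) - m = (t : ℕ); omega))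
    -- window divided differences
    set Dg : ℕ → ℝ := fun j => divDiff ω g (fun t : Fin (k+2) => u (j + (t : ℕ))) with hDgdef
    set Dh : ℕ → ℝ := fun j => divDiff ω h (fun t : Fin (k+2) => u (j + (t : ℕ))) with hDhdef
    set DG : ℕ → ℝ := fun j => divDiff ω G (fun t : Fin (k+2) => u (j + (t : ℕ))) with hDGdef
    have hDgstep : ∀ j, j + (k+2) ≤ L → Dg j ≤ Dg (j+1) := fun j hj =>
      window_step ω hω hω'' g hg u L humono humem j hj
    have hDhstep : ∀ j, j + (k+2) ≤ L → Dh j ≤ Dh (j+1) := fun j hj =>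
      window_step ω hω hω'' h hh u L humono humem j hj
    have hDgmono : ∀ i j, i ≤ j → j + (k+1) ≤ L → Dg i ≤ Dg j := fun i j hij hj =>
      window_mono ω hω hω'' g hg u L humono humem i j hij hj
    have hDhmono : ∀ i j, i ≤ j → j + (k+1) ≤ L → Dh i ≤ Dh j := fun i j hij hj =>
      window_mono ω hω hω'' h hh u L humono humem i j hij hj
    have hDGadd : ∀ j : ℕ, DG j = Dg j + Dh j := fun j =>
      divDiff_add ω g h (fun t : Fin (k+2) => u (j + (t : ℕ)))
    have hDfwin : ∀ j : ℕ, j + (k+1) ≤ L →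
        divDiff ω f (fun t : Fin (k+2) => u (j + (t : ℕ))) = Dg j - Dh j := by
      intro j hj
      rw [hDgdef, hDhdef]
      rw [← divDiff_sub]
      exact divDiff_congr ω f (fun t => g t - h t) _
        (fun t => hf _ (humem _ (by have := t.isLt; omega)))
    -- identify partition windows with u-windows
    have htup0 : ∀ i : Fin (m - (k+2) + 1),
        (fun t : Fin (k+2) =>
            x ⟨(i : ℕ) + (t : ℕ), by have := i.isLt; have := t.isLt; omega⟩)
          = (fun t : Fin (k+2) => u (k + 1 + (i : ℕ) + (t : ℕ))) := by
      intro i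
      funext t
      rw [hux (k + 1 + (i : ℕ) + (t : ℕ)) (by omega)
        (by have := i.isLt; have := t.isLt; omega)]
      exact congrArg x (Fin.ext (by
        show (i : ℕ) + (t : ℕ) = k + 1 + (i : ℕ) + (t : ℕ) - (k + 1); omega))
    have htup1 : ∀ i : Fin (m - (k+2) + 1),
        (fun t : Fin (k+2) =>
            x ⟨(i : ℕ) + 1 + (t : ℕ), by have := i.isLt; have := t.isLt; omega⟩)
          = (fun t : Fin (k+2) => u (k + 1 + (i : ℕ) + 1 + (t : ℕ))) := by
      intro i
      funext t
      rw [hux (k + 1 + (i : ℕ) + 1 + (t : ℕ)) (by omega)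
        (by have := i.isLt; have := t.isLt; omega)]
      exact congrArg x (Fin.ext (by
        show (i : ℕ) + 1 + (t : ℕ) = k + 1 + (i : ℕ) + 1 + (t : ℕ) - (k + 1); omega))
    -- the real-valued bound
    have hsum : (∑ i : Fin (m - (k+2) + 1),
        |divDiff ω f (fun t : Fin (k+2) =>
            x ⟨(i : ℕ) + 1 + (t : ℕ), by have := i.isLt; have := t.isLt; omega⟩)
          - divDiff ω f (fun t : Fin (k+2) =>
            x ⟨(i : ℕ) + (t : ℕ), by have := i.isLt; have := t.isLt; omega⟩)|)
        ≤ divDiff ω G B - divDiff ω G A := by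
      have hstep : ∀ i : Fin (m - (k+2) + 1),
          |divDiff ω f (fun t : Fin (k+2) =>
              x ⟨(i : ℕ) + 1 + (t : ℕ), by have := i.isLt; have := t.isLt; omega⟩)
            - divDiff ω f (fun t : Fin (k+2) =>
              x ⟨(i : ℕ) + (t : ℕ), by have := i.isLt; have := t.isLt; omega⟩)|
          ≤ DG (k + 1 + (i : ℕ) + 1) - DG (k + 1 + (i : ℕ)) := by
        intro i
        have hiL : (i : ℕ) ≤ m - (k + 2) := by have := i.isLt; omega
        rw [htup0 i, htup1 i, hDfwin (k + 1 + (i : ℕ)) (by omega),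
          hDfwin (k + 1 + (i : ℕ) + 1) (by omega), hDGadd, hDGadd]
        have h1 : Dg (k + 1 + (i : ℕ)) ≤ Dg (k + 1 + (i : ℕ) + 1) :=
          hDgstep _ (by omega)
        have h2 : Dh (k + 1 + (i : ℕ)) ≤ Dh (k + 1 + (i : ℕ) + 1) :=
          hDhstep _ (by omega)
        rw [abs_le]
        constructor <;> [skip; skip] <;> nlinarith [h1, h2]
      refine le_trans (Finset.sum_le_sum (fun i _ => hstep i)) ?_
      -- telescoping
      have htel : (∑ i : Fin (m - (k+2) + 1), (DG (k + 1 + (i : ℕ) + 1) - DG (k + 1 + (i : ℕ))))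
          = DG (k + 1 + (m - (k+2) + 1)) - DG (k + 1) := by
        rw [Fin.sum_univ_eq_sum_range (fun j => DG (k + 1 + j + 1) - DG (k + 1 + j))]
        exact Finset.sum_range_sub (fun j => DG (k + 1 + j)) (m - (k+2) + 1)
      rw [htel]
      have he1 : DG (k + 1 + (m - (k+2) + 1)) = DG m := by
        refine congrArg DG ?_; omega
      have hgm : Dg m ≤ Dg (k + 1 + m) := hDgmono m (k+1+m) (by omega) (by omega)
      have hhm : Dh m ≤ Dh (k + 1 + m) := hDhmono m (k+1+m) (by omega) (by omega)
      have hg0 : Dg 0 ≤ Dg (k + 1) := hDgmono 0 (k+1) (by omega) (by omega)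
      have hh0 : Dh 0 ≤ Dh (k + 1) := hDhmono 0 (k+1) (by omega) (by omega)
      have hBG : DG (k + 1 + m) = divDiff ω G B := by
        rw [hDGdef]
        exact congrArg (divDiff ω G) hDB
      have hAG : DG 0 = divDiff ω G A := by
        rw [hDGdef]
        exact congrArg (divDiff ω G) hDA
      have e1 := hDGadd m
      have e2 := hDGadd (k+1+m)
      have e3 := hDGadd 0
      have e4 := hDGadd (k+1)
      rw [he1]
      linarith [hgm, hhm, hg0, hh0, hBG.symm ▸ e2, hAG.symm ▸ e3, e1, e4,
        hBG, hAG]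
    calc (∑ i : Fin (m - (k+2) + 1), ENNReal.ofReal
          |divDiff ω f (fun t : Fin (k+2) =>
              x ⟨(i : ℕ) + 1 + (t : ℕ), by have := i.isLt; have := t.isLt; omega⟩)
            - divDiff ω f (fun t : Fin (k+2) =>
              x ⟨(i : ℕ) + (t : ℕ), by have := i.isLt; have := t.isLt; omega⟩)|)
        = ENNReal.ofReal (∑ i : Fin (m - (k+2) + 1),
          |divDiff ω f (fun t : Fin (k+2) =>
              x ⟨(i : ℕ) + 1 + (t : ℕ), by have := i.isLt; have := t.isLt; omega⟩)
            - divDiff ω f (fun t : Fin (k+2) =>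
              x ⟨(i : ℕ) + (t : ℕ), by have := i.isLt; have := t.isLt; omega⟩)|) :=
          (ENNReal.ofReal_sum_of_nonneg (fun i _ => abs_nonneg _)).symm
      _ ≤ ENNReal.ofReal (divDiff ω G B - divDiff ω G A) :=
          ENNReal.ofReal_le_ofReal hsum
  constructor
  · -- finiteness
    obtain ⟨εa, hεa, hballa⟩ := Metric.isOpen_iff.mp hHopen a haH
    obtain ⟨εb, hεb, hballb⟩ := Metric.isOpen_iff.mp hHopen b hbH
    set da : ℝ := εa / (2 * (k : ℝ) + 4) with hda
    set db : ℝ := εb / (2 * (k : ℝ) + 4) with hdb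
    have hda0 : 0 < da := by rw [hda]; positivity
    have hdb0 : 0 < db := by rw [hdb]; positivity
    set A : Fin (k+2) → ℝ := fun i => a - ((k + 1 - (i : ℕ) : ℕ) : ℝ) * da with hA
    set B : Fin (k+2) → ℝ := fun i => b + ((i : ℕ) : ℝ) * db with hB
    have hAm : StrictMono A := by
      intro i j hij
      have hij' : (i : ℕ) < (j : ℕ) := hij
      have h1 : ((k + 1 - (j : ℕ) : ℕ) : ℝ) < ((k + 1 - (i : ℕ) : ℕ) : ℝ) :=
        Nat.cast_lt.mpr (by have := j.isLt; omega)
      simp only [hA]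
      nlinarith [h1, hda0, mul_pos (sub_pos.mpr h1) hda0]
    have hBm : StrictMono B := by
      intro i j hij
      have hij' : ((i : ℕ) : ℝ) < ((j : ℕ) : ℝ) := Nat.cast_lt.mpr hij
      simp only [hB]
      nlinarith [hij', hdb0, mul_pos (sub_pos.mpr hij') hdb0]
    have hcast : ∀ i : Fin (k+2), ((k + 1 - (i : ℕ) : ℕ) : ℝ) ≤ 2 * (k : ℝ) + 4 := by
      intro i
      calc ((k + 1 - (i : ℕ) : ℕ) : ℝ) ≤ ((2 * k + 4 : ℕ) : ℝ) := Nat.cast_le.mpr (by omega)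
        _ = 2 * (k : ℝ) + 4 := by push_cast; ring
    have hAH : ∀ i, A i ∈ H := by
      intro i
      apply hballa
      rw [Metric.mem_ball, Real.dist_eq]
      have hAi : A i - a = -(((k + 1 - (i : ℕ) : ℕ) : ℝ) * da) := by
        simp only [hA]; ring
      rw [hAi, abs_neg, abs_of_nonneg (by positivity)]
      have hlt : ((k + 1 - (i : ℕ) : ℕ) : ℝ) < 2 * (k : ℝ) + 4 := by
        calc ((k + 1 - (i : ℕ) : ℕ) : ℝ) ≤ ((k + 1 : ℕ) : ℝ) := Nat.cast_le.mpr (by omega)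
          _ = (k : ℝ) + 1 := by push_cast; ring
          _ < 2 * (k : ℝ) + 4 := by have : (0:ℝ) ≤ (k:ℝ) := Nat.cast_nonneg _; linarith
      calc ((k + 1 - (i : ℕ) : ℕ) : ℝ) * da < (2 * (k : ℝ) + 4) * da :=
            mul_lt_mul_of_pos_right hlt hda0
        _ = εa := by rw [hda]; field_simp
    have hBH : ∀ i, B i ∈ H := by
      intro i
      apply hballb
      rw [Metric.mem_ball, Real.dist_eq]
      have hBi : B i - b = ((i : ℕ) : ℝ) * db := by simp only [hB]; ring
      rw [hBi, abs_of_nonneg (by positivity)]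
      have hlt : (((i : ℕ) : ℕ) : ℝ) < 2 * (k : ℝ) + 4 := by
        calc ((i : ℕ) : ℝ) ≤ ((k + 1 : ℕ) : ℝ) := Nat.cast_le.mpr (by have := i.isLt; omega)
          _ = (k : ℝ) + 1 := by push_cast; ring
          _ < 2 * (k : ℝ) + 4 := by have : (0:ℝ) ≤ (k:ℝ) := Nat.cast_nonneg _; linarith
      calc ((i : ℕ) : ℝ) * db < (2 * (k : ℝ) + 4) * db := mul_lt_mul_of_pos_right hlt hdb0
        _ = εb := by rw [hdb]; field_simp
    have hAa : A ⟨k + 2 - 1, by omega⟩ = a := by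
      simp only [hA]
      have h0 : (k + 1 - ((⟨k + 2 - 1, by omega⟩ : Fin (k+2)) : ℕ) : ℕ) = 0 := by
        show k + 1 - (k + 2 - 1) = 0; omega
      rw [h0]
      simp
    have hBb : B ⟨0, by omega⟩ = b := by
      simp only [hB]
      show b + ((0 : ℕ) : ℝ) * db = b
      simp
    exact ne_top_of_le_ne_top ENNReal.ofReal_ne_top
      (main A B hAH hBH hAm hBm hAa hBb)
  · intro A B hAH hBH hAm hBm hAa hBb
    exact main A B hAH hBH hAm hBm hAa hBb
end

section
/- Let n ∈ ℕ and let I ⊆ ℝ be an open interval whose length is at most 2π. Then the function ω : I → ℝ^{2n+1} given by ω(x) = (1, cos x, sin x, cos 2x, sin 2x, …, cos nx, sin nx) is a (2n+1)-dimensional positive Chebyshev system over I; that is, the (2n+1)×(2n+1) determinant det(ω_i(x_j)) is positive for all x₁ < … < x_{2n+1} in I. -/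
open Equiv Equiv.Perm

/-- value of the row-permutation -/
def sigfun (n : ℕ) (i : Fin (2*n+1)) : Fin (2*n+1) :=
  ⟨if i.1 = 0 then n else if i.1 % 2 = 1 then n + (i.1+1)/2 else n - i.1/2, by
    have := i.2; split_ifs <;> omega⟩

noncomputable def sigperm (n : ℕ) : Equiv.Perm (Fin (2*n+1)) :=
  Equiv.ofBijective (sigfun n) (by
    rw [Finite.injective_iff_bijective.symm]
    intro i j h
    have hi := i.2; have hj := j.2
    have h' := congrArg Fin.val h
    simp only [sigfun] at h'
    apply Fin.ext
    split_ifs at h' <;> omega)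

lemma sigperm_apply (n : ℕ) (i : Fin (2*n+1)) : sigperm n i = sigfun n i := rfl

lemma sigperm_succ (n : ℕ) :
    sigperm (n+1) = (finRotate (2*n+1+2) : Equiv.Perm (Fin (2*n+1+2))) *
      (Equiv.permCongr (finSumFinEquiv (m := 2*n+1) (n := 2))
        (Equiv.sumCongr (sigperm n) (Equiv.refl (Fin 2)))) := by
  ext i
  rcases i with ⟨iv, hiv⟩
  simp only [Perm.mul_apply, sigperm_apply, sigfun, Equiv.permCongr_apply]
  rcases lt_or_ge iv (2*n+1) with hlt | hge
  · have h1 : (⟨iv, hiv⟩ : Fin (2*n+1+2)) = Fin.castAdd 2 ⟨iv, hlt⟩ := rfl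
    rw [h1]; erw [finSumFinEquiv_symm_apply_castAdd]
    simp only [Equiv.sumCongr_apply, Sum.map_inl, sigperm_apply, sigfun]
    erw [finSumFinEquiv_apply_left, finRotate_succ_apply]
    rw [Fin.val_add_one_of_lt]
    · simp only [Fin.coe_castAdd]
      split_ifs <;> omega
    · rw [Fin.lt_iff_val_lt_val]
      simp only [Fin.coe_castAdd, Fin.val_last]
      split_ifs <;> omega
  · have h2 : iv - (2*n+1) < 2 := by omega
    have h1 : (⟨iv, hiv⟩ : Fin (2*n+1+2)) = Fin.natAdd (2*n+1) ⟨iv - (2*n+1), h2⟩ := by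
      apply Fin.ext; simp; omega
    rw [h1]; erw [finSumFinEquiv_symm_apply_natAdd]
    simp only [Equiv.sumCongr_apply, Sum.map_inr, Equiv.refl_apply]
    erw [finSumFinEquiv_apply_right, finRotate_succ_apply]
    rcases Nat.lt_or_ge (iv - (2*n+1)) 1 with h3 | h3
    · rw [Fin.val_add_one_of_lt]
      · simp only [Fin.coe_natAdd]
        split_ifs <;> omega
      · rw [Fin.lt_iff_val_lt_val]
        simp only [Fin.coe_natAdd, Fin.val_last]
        omega
    · have h4 : iv = 2*n+2 := by omega
      have h5 : Fin.natAdd (2*n+1) (⟨iv - (2*n+1), h2⟩ : Fin 2) = Fin.last (2*n+1+1) := by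
        apply Fin.ext; simp; omega
      rw [h5, Fin.last_add_one]
      simp only [Fin.val_zero]
      split_ifs <;> omega


lemma sign_sigperm (n : ℕ) : Equiv.Perm.sign (sigperm n) = 1 := by
  induction n with
  | zero =>
    have : sigperm 0 = 1 := by
      ext i
      have h1 := (sigperm 0 i).2
      have h2 := i.2
      simp only [Equiv.Perm.one_apply]
      omega
    simp [this]
  | succ n ih =>
    rw [sigperm_succ, Equiv.Perm.sign_mul]
    erw [Equiv.Perm.sign_permCongr]
    rw [Equiv.Perm.sign_sumCongr, ih]
    simp only [Equiv.Perm.sign_refl, mul_one, one_mul]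
    have he : Even (2*n+1+1) := ⟨n+1, by ring⟩
    erw [sign_finRotate, he.neg_one_pow]

open Complex Matrix Finset

variable (n : ℕ) (x : Fin (2*n+1) → ℝ)

/-- exponent of row `i`. -/
def muZ (i : ℕ) : ℤ := if i = 0 then 0 else if i % 2 = 1 then (((i+1)/2 : ℕ) : ℤ) else -((i/2 : ℕ) : ℤ)

noncomputable def Amat : Matrix (Fin (2*n+1)) (Fin (2*n+1)) ℂ :=
  Matrix.of fun i j => if (i : ℕ) = 0 then 1
    else if (i : ℕ) % 2 = 1 then Complex.cos (((((i:ℕ)+1)/2 : ℕ) : ℂ) * (x j : ℂ))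
    else Complex.sin ((((i:ℕ)/2 : ℕ) : ℂ) * (x j : ℂ))

noncomputable def Bmat : Matrix (Fin (2*n+1)) (Fin (2*n+1)) ℂ :=
  Matrix.of fun i j => if (i : ℕ) = 0 then 1
    else if (i : ℕ) % 2 = 1 then Complex.exp (((((i:ℕ)+1)/2 : ℕ) : ℂ) * (x j : ℂ) * I)
    else Complex.sin ((((i:ℕ)/2 : ℕ) : ℂ) * (x j : ℂ))

noncomputable def Dmat : Matrix (Fin (2*n+1)) (Fin (2*n+1)) ℂ :=
  Matrix.of fun i a => if (a : ℕ) = (i : ℕ) then 1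
    else if (i : ℕ) % 2 = 1 ∧ (a : ℕ) = (i : ℕ) + 1 then -I else 0

noncomputable def Cmat : Matrix (Fin (2*n+1)) (Fin (2*n+1)) ℂ :=
  Matrix.of fun i b => if (b : ℕ) = (i : ℕ) then (if (i : ℕ) % 2 = 1 ∨ (i : ℕ) = 0 then 1 else I/2)
    else if (i : ℕ) % 2 = 0 ∧ (i : ℕ) ≠ 0 ∧ (b : ℕ) + 1 = (i : ℕ) then -(I/2) else 0

noncomputable def Mmat : Matrix (Fin (2*n+1)) (Fin (2*n+1)) ℂ :=
  Matrix.of fun i j => Complex.exp ((muZ (i : ℕ) : ℂ) * (x j : ℂ) * I)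

lemma fin_sum_ite {N : ℕ} (c : ℕ) (hc : c < N) (f : Fin N → ℂ) :
    ∑ a : Fin N, (if (a : ℕ) = c then f a else 0) = f ⟨c, hc⟩ := by
  rw [Finset.sum_eq_single (⟨c, hc⟩ : Fin N)]
  · simp
  · intro b _ hb
    have : (b : ℕ) ≠ c := fun h => hb (Fin.ext h)
    simp [this]
  · simp

lemma Dmat_det : (Dmat n).det = 1 := by
  rw [Matrix.det_of_upperTriangular]
  · apply Finset.prod_eq_one
    intro i _
    simp [Dmat]
  · intro i j hij
    have h1 : (j : ℕ) < (i : ℕ) := hij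
    simp only [Dmat, Matrix.of_apply]
    split_ifs with h2 h3 <;> first | (exfalso; omega) | rfl

lemma Cmat_det : (Cmat n).det = (I/2)^n := by
  rw [Matrix.det_of_lowerTriangular]
  · have key : ∀ m : ℕ, ∏ i ∈ Finset.range (2*m+1),
        (if i % 2 = 1 ∨ i = 0 then (1:ℂ) else I/2) = (I/2)^m := by
      intro m
      induction m with
      | zero => simp
      | succ m ih =>
        have h1 : 2*(m+1)+1 = (2*m+1) + 1 + 1 := by ring
        rw [h1, Finset.prod_range_succ, Finset.prod_range_succ, ih]
        have h2 : (2*m+1) % 2 = 1 := by omega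
        have h3 : ¬((2*m+1+1) % 2 = 1 ∨ 2*m+1+1 = 0) := by omega
        rw [if_pos (Or.inl h2), if_neg h3]
        ring
    calc ∏ i : Fin (2*n+1), (Cmat n) i i
        = ∏ i ∈ Finset.range (2*n+1), (if i % 2 = 1 ∨ i = 0 then (1:ℂ) else I/2) := by
          rw [Finset.prod_range fun i => (if i % 2 = 1 ∨ i = 0 then (1:ℂ) else I/2)]
          apply Finset.prod_congr rfl
          intro i _
          simp [Cmat]
      _ = (I/2)^n := key n
  · intro i j hij
    have h1 : (i : ℕ) < (j : ℕ) := hij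
    simp only [Cmat, Matrix.of_apply]
    split_ifs <;> first | (exfalso; omega) | rfl

lemma A_eq_DB : Amat n x = Dmat n * Bmat n x := by
  ext i j
  rw [Matrix.mul_apply]
  rcases eq_or_ne (i : ℕ) 0 with h0 | h0
  · have : ∀ a : Fin (2*n+1), Dmat n i a * Bmat n x a j
        = if (a : ℕ) = (i : ℕ) then Bmat n x a j else 0 := by
      intro a
      simp only [Dmat, Matrix.of_apply]
      split_ifs with h1 h2 <;> first | ring1 | (exfalso; omega)
    rw [Finset.sum_congr rfl fun a _ => this a]
    rw [show (i:ℕ) = (i:ℕ) from rfl] at *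
    rw [fin_sum_ite (i : ℕ) i.2]
    simp only [Amat, Bmat, Matrix.of_apply, h0]
    simp [h0]
  · rcases eq_or_ne ((i : ℕ) % 2) 1 with h1 | h1
    · -- cosine row : exp row minus I * sin row
      have hlt : (i : ℕ) + 1 < 2*n+1 := by have := i.2; omega
      have : ∀ a : Fin (2*n+1), Dmat n i a * Bmat n x a j
          = (if (a : ℕ) = (i : ℕ) then Bmat n x a j else 0)
            + (if (a : ℕ) = (i : ℕ) + 1 then -I * Bmat n x a j else 0) := by
        intro a
        simp only [Dmat, Matrix.of_apply]
        split_ifs <;> first | ring1 | (exfalso; omega)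
      rw [Finset.sum_congr rfl fun a _ => this a, Finset.sum_add_distrib,
        fin_sum_ite (i : ℕ) i.2, fin_sum_ite ((i : ℕ)+1) hlt]
      simp only [Amat, Bmat, Matrix.of_apply, h0, h1]
      have e1 : ((⟨(i:ℕ), i.2⟩ : Fin (2*n+1)) : ℕ) = (i : ℕ) := rfl
      have e2 : ((⟨(i:ℕ)+1, hlt⟩ : Fin (2*n+1)) : ℕ) = (i : ℕ) + 1 := rfl
      rw [e1, e2] at *
      simp only [h0, h1, if_false, if_true, if_neg (by omega : ¬ ((i:ℕ)+1 = 0)),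
        if_neg (by omega : ¬ (((i:ℕ)+1) % 2 = 1))]
      rw [Complex.exp_mul_I]
      ring
    · -- sine row : identity
      have : ∀ a : Fin (2*n+1), Dmat n i a * Bmat n x a j
          = if (a : ℕ) = (i : ℕ) then Bmat n x a j else 0 := by
        intro a
        simp only [Dmat, Matrix.of_apply]
        split_ifs <;> first | ring1 | (exfalso; omega)
      rw [Finset.sum_congr rfl fun a _ => this a, fin_sum_ite (i : ℕ) i.2]
      simp only [Amat, Bmat, Matrix.of_apply]
      have e1 : ((⟨(i:ℕ), i.2⟩ : Fin (2*n+1)) : ℕ) = (i : ℕ) := rfl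
      rw [e1] at *
      simp [h0, h1]

lemma muZ_zero : muZ 0 = 0 := rfl

lemma B_eq_CM : Bmat n x = Cmat n * Mmat n x := by
  ext i j
  rw [Matrix.mul_apply]
  rcases eq_or_ne (i : ℕ) 0 with h0 | h0
  · have : ∀ b : Fin (2*n+1), Cmat n i b * Mmat n x b j
        = if (b : ℕ) = (i : ℕ) then Mmat n x b j else 0 := by
      intro b
      simp only [Cmat, Matrix.of_apply]
      split_ifs <;> first | ring1 | (exfalso; omega)
    rw [Finset.sum_congr rfl fun b _ => this b, fin_sum_ite (i : ℕ) i.2]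
    simp only [Bmat, Mmat, Matrix.of_apply]
    have e1 : ((⟨(i:ℕ), i.2⟩ : Fin (2*n+1)) : ℕ) = (i : ℕ) := rfl
    rw [e1, h0]
    simp [muZ]
  · rcases eq_or_ne ((i : ℕ) % 2) 1 with h1 | h1
    · -- exp row: single entry
      have : ∀ b : Fin (2*n+1), Cmat n i b * Mmat n x b j
          = if (b : ℕ) = (i : ℕ) then Mmat n x b j else 0 := by
        intro b
        simp only [Cmat, Matrix.of_apply]
        split_ifs <;> first | ring1 | (exfalso; omega)
      rw [Finset.sum_congr rfl fun b _ => this b, fin_sum_ite (i : ℕ) i.2]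
      simp only [Bmat, Mmat, Matrix.of_apply]
      have e1 : ((⟨(i:ℕ), i.2⟩ : Fin (2*n+1)) : ℕ) = (i : ℕ) := rfl
      rw [e1]
      simp only [h0, h1, if_false, if_true, muZ, if_neg h0, if_pos h1]
      norm_cast
    · -- sin row
      have hm : (i : ℕ) - 1 < 2*n+1 := by have := i.2; omega
      have : ∀ b : Fin (2*n+1), Cmat n i b * Mmat n x b j
          = (if (b : ℕ) = (i : ℕ) then (I/2) * Mmat n x b j else 0)
            + (if (b : ℕ) = (i : ℕ) - 1 then -(I/2) * Mmat n x b j else 0) := by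
        intro b
        simp only [Cmat, Matrix.of_apply]
        split_ifs <;> first | ring1 | (exfalso; omega)
      rw [Finset.sum_congr rfl fun b _ => this b, Finset.sum_add_distrib,
        fin_sum_ite (i : ℕ) i.2, fin_sum_ite ((i : ℕ) - 1) hm]
      simp only [Bmat, Mmat, Matrix.of_apply]
      rw [if_neg h0, if_neg h1]
      have hmu1 : muZ (i : ℕ) = -(((i:ℕ)/2 : ℕ) : ℤ) := by
        simp only [muZ, if_neg h0, if_neg h1]
      have hmu2 : muZ ((i : ℕ) - 1) = (((i:ℕ)/2 : ℕ) : ℤ) := by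
        have hne : (i:ℕ) - 1 ≠ 0 := by omega
        have hod : ((i:ℕ) - 1) % 2 = 1 := by omega
        simp only [muZ, if_neg hne, if_pos hod]
        congr 1
        omega
      rw [hmu1, hmu2]
      rw [show ((-((((i:ℕ)/2 : ℕ) : ℤ)) : ℤ) : ℂ) = -(((((i:ℕ)/2 : ℕ)) : ℤ) : ℂ) by push_cast; ring]
      set k : ℂ := (((((i:ℕ)/2 : ℕ) : ℤ)) : ℂ)
      set z : ℂ := (x j : ℂ)
      have hk : (((((i:ℕ)/2 : ℕ)) : ℂ)) = k := by push_cast [k]; ring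
      rw [hk]
      have : Complex.sin (k * z) = (cexp (-(k * z) * I) - cexp (k * z * I)) * I / 2 := by
        rw [Complex.sin]
      rw [this]
      rw [show -(k * z) * I = -k * z * I by ring]
      ring

noncomputable def Wmat : Matrix (Fin (2*n+1)) (Fin (2*n+1)) ℂ :=
  Matrix.of fun i j => Complex.exp (((((i:ℕ) : ℤ) - (n : ℤ) : ℤ) : ℂ) * (x j : ℂ) * I)

lemma sig_val (i : Fin (2*n+1)) : (((sigperm n i) : ℕ) : ℤ) = muZ (i : ℕ) + n := by
  have h2 := i.2
  rw [sigperm_apply]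
  simp only [sigfun, muZ]
  split_ifs <;> push_cast <;> omega

lemma M_eq_subW : Mmat n x = (Wmat n x).submatrix (sigperm n) id := by
  ext i j
  simp only [Mmat, Wmat, Matrix.submatrix_apply, Matrix.of_apply, id]
  congr 2
  rw [show ((((sigperm n i : ℕ) : ℤ) - (n:ℤ) : ℤ) : ℂ)
      = (((((sigperm n i) : ℕ) : ℤ) : ℂ)) - ((n:ℤ) : ℂ) by push_cast; ring, sig_val]
  push_cast
  ring

lemma M_det : (Mmat n x).det = (Wmat n x).det := by
  rw [M_eq_subW, Matrix.det_permute, sign_sigperm]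
  simp

lemma W_det : (Wmat n x).det
    = (∏ j, Complex.exp (-(n:ℂ) * (x j : ℂ) * I)) *
      ∏ i : Fin (2*n+1), ∏ j ∈ Finset.Ioi i,
        (Complex.exp ((x j : ℂ) * I) - Complex.exp ((x i : ℂ) * I)) := by
  rw [← Matrix.det_transpose]
  have h : (Wmat n x)ᵀ = Matrix.diagonal (fun j => Complex.exp (-(n:ℂ) * (x j : ℂ) * I))
      * Matrix.vandermonde (fun j => Complex.exp ((x j : ℂ) * I)) := by
    ext j i
    rw [Matrix.diagonal_mul, Matrix.transpose_apply]
    simp only [Wmat, Matrix.of_apply, Matrix.vandermonde_apply]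
    rw [← Complex.exp_nat_mul, ← Complex.exp_add]
    congr 1
    push_cast
    ring
  rw [h, Matrix.det_mul, Matrix.det_diagonal, Matrix.det_vandermonde]

lemma exp_pair (c d : ℂ) :
    Complex.exp ((c+d)*I) - Complex.exp ((c-d)*I) = Complex.exp (c*I) * (2*I) * Complex.sin d := by
  rw [Complex.exp_mul_I, Complex.exp_mul_I, Complex.exp_mul_I, Complex.cos_add,
    Complex.sin_add, Complex.cos_sub, Complex.sin_sub]
  linear_combination (-2 * Complex.sin c * Complex.sin d) * Complex.I_sq

lemma exp_pair' (u w : ℝ) :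
    Complex.exp ((w:ℂ)*I) - Complex.exp ((u:ℂ)*I)
      = Complex.exp ((((u+w)/2 : ℝ) : ℂ)*I) * (2*I) * ((Real.sin ((w-u)/2) : ℝ) : ℂ) := by
  have h := exp_pair ((((u+w)/2 : ℝ) : ℂ)) ((((w-u)/2 : ℝ) : ℂ))
  rw [show ((((u+w)/2 : ℝ) : ℂ) + (((w-u)/2 : ℝ) : ℂ)) = (w : ℂ) by push_cast; ring,
    show ((((u+w)/2 : ℝ) : ℂ) - (((w-u)/2 : ℝ) : ℂ)) = (u : ℂ) by push_cast; ring] at h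
  rw [h, Complex.ofReal_sin]

lemma sum_Ioi_swap {M : Type*} [AddCommMonoid M] {N : ℕ} (g : Fin N → Fin N → M) :
    ∑ i, ∑ j ∈ Finset.Ioi i, g i j = ∑ j, ∑ i ∈ Finset.Iio j, g i j := by
  rw [Finset.sum_sigma', Finset.sum_sigma']
  apply Finset.sum_nbij' (fun p => ⟨p.2, p.1⟩) (fun p => ⟨p.2, p.1⟩) <;>
    simp [Finset.mem_sigma, Finset.mem_Ioi, Finset.mem_Iio]

lemma card_sum_Ioi : ∑ i : Fin (2*n+1), (Finset.Ioi i).card = n * (2*n+1) := by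
  have h1 : ∀ i : Fin (2*n+1), (Finset.Ioi i).card = 2*n - (i : ℕ) := by
    intro i; rw [Fin.card_Ioi]; omega
  rw [Finset.sum_congr rfl fun i _ => h1 i]
  rw [Fin.sum_univ_eq_sum_range (fun k => 2*n - k)]
  have h2 := Finset.sum_range_reflect (fun k => k) (2*n+1)
  have h3 : ∀ j ∈ Finset.range (2*n+1), 2*n - j = 2*n+1-1-j := by intro j _; omega
  rw [Finset.sum_congr rfl h3, h2]
  have h4 := Finset.sum_range_id_mul_two (2*n+1)
  have h5 : 2*n+1-1 = 2*n := by omega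
  rw [h5] at h4
  have h6 : (2*n+1)*(2*n) = (n*(2*n+1))*2 := by ring
  exact Nat.eq_of_mul_eq_mul_right two_pos (h4.trans h6)

lemma sum_pair_halves :
    ∑ i : Fin (2*n+1), ∑ j ∈ Finset.Ioi i, ((x i + x j)/2) = (n : ℝ) * ∑ j, x j := by
  have key : ∑ i : Fin (2*n+1), ∑ j ∈ Finset.Ioi i, (x i + x j) = (2*n : ℝ) * ∑ j, x j := by
    have h1 : ∀ i : Fin (2*n+1), ∑ j ∈ Finset.Ioi i, (x i + x j)
        = (Finset.Ioi i).card • x i + ∑ j ∈ Finset.Ioi i, x j := by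
      intro i
      rw [Finset.sum_add_distrib, Finset.sum_const]
    rw [Finset.sum_congr rfl fun i _ => h1 i, Finset.sum_add_distrib]
    have h2 : ∑ i : Fin (2*n+1), ∑ j ∈ Finset.Ioi i, x j
        = ∑ j : Fin (2*n+1), (Finset.Iio j).card • x j := by
      rw [sum_Ioi_swap (fun i j => x j)]
      exact Finset.sum_congr rfl fun j _ => by rw [Finset.sum_const]
    rw [h2, ← Finset.sum_add_distrib]
    rw [Finset.mul_sum]
    apply Finset.sum_congr rfl
    intro i _
    rw [Fin.card_Ioi, Fin.card_Iio]
    have h5 : (2*n+1-1-(i:ℕ)) + (i:ℕ) = 2*n := by have := i.2; omega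
    rw [← add_nsmul, h5]
    rw [nsmul_eq_mul]
    push_cast
    ring
  have h6 : ∑ i : Fin (2*n+1), ∑ j ∈ Finset.Ioi i, ((x i + x j)/2)
      = (∑ i : Fin (2*n+1), ∑ j ∈ Finset.Ioi i, (x i + x j))/2 := by
    rw [Finset.sum_div]
    exact Finset.sum_congr rfl fun i _ => by rw [Finset.sum_div]
  rw [h6, key]
  ring

lemma prod_pairs :
    ∏ i : Fin (2*n+1), ∏ j ∈ Finset.Ioi i,
        (Complex.exp ((x j : ℂ) * I) - Complex.exp ((x i : ℂ) * I))
    = Complex.exp ((n:ℂ) * ((∑ j, x j : ℝ) : ℂ) * I) * (2*I)^(n*(2*n+1)) *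
      ∏ i : Fin (2*n+1), ∏ j ∈ Finset.Ioi i, ((Real.sin ((x j - x i)/2) : ℝ) : ℂ) := by
  have h1 : ∀ i : Fin (2*n+1), ∀ j ∈ Finset.Ioi i,
      Complex.exp ((x j : ℂ) * I) - Complex.exp ((x i : ℂ) * I)
      = Complex.exp ((((x i + x j)/2 : ℝ) : ℂ)*I) * (2*I) * ((Real.sin ((x j - x i)/2) : ℝ) : ℂ) :=
    fun i j _ => exp_pair' (x i) (x j)
  rw [Finset.prod_congr rfl fun i _ => Finset.prod_congr rfl (h1 i)]
  have h2 : ∀ i : Fin (2*n+1),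
      ∏ j ∈ Finset.Ioi i,
        (Complex.exp ((((x i + x j)/2 : ℝ) : ℂ)*I) * (2*I) * ((Real.sin ((x j - x i)/2) : ℝ) : ℂ))
      = (∏ j ∈ Finset.Ioi i, Complex.exp ((((x i + x j)/2 : ℝ) : ℂ)*I))
        * (∏ j ∈ Finset.Ioi i, (2*I))
        * (∏ j ∈ Finset.Ioi i, ((Real.sin ((x j - x i)/2) : ℝ) : ℂ)) := by
    intro i
    rw [Finset.prod_mul_distrib, Finset.prod_mul_distrib]
  rw [Finset.prod_congr rfl fun i _ => h2 i]
  rw [Finset.prod_mul_distrib, Finset.prod_mul_distrib]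
  congr 1
  congr 1
  · -- product of exponentials
    have h3 : ∀ i : Fin (2*n+1),
        ∏ j ∈ Finset.Ioi i, Complex.exp ((((x i + x j)/2 : ℝ) : ℂ)*I)
        = Complex.exp (∑ j ∈ Finset.Ioi i, ((((x i + x j)/2 : ℝ) : ℂ)*I)) := by
      intro i
      rw [Complex.exp_sum]
    rw [Finset.prod_congr rfl fun i _ => h3 i, ← Complex.exp_sum]
    congr 1
    have h4 : ∀ i : Fin (2*n+1), ∑ j ∈ Finset.Ioi i, ((((x i + x j)/2 : ℝ) : ℂ)*I)
        = ((∑ j ∈ Finset.Ioi i, ((x i + x j)/2) : ℝ) : ℂ) * I := by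
      intro i
      rw [← Finset.sum_mul]
      norm_cast
    rw [Finset.sum_congr rfl fun i _ => h4 i]
    have h5 : ∑ i : Fin (2*n+1), ((∑ j ∈ Finset.Ioi i, ((x i + x j)/2) : ℝ) : ℂ) * I
        = ((∑ i : Fin (2*n+1), ∑ j ∈ Finset.Ioi i, ((x i + x j)/2) : ℝ) : ℂ) * I := by
      rw [← Finset.sum_mul]
      norm_cast
    rw [h5, sum_pair_halves]
    push_cast
    ring
  · -- product of constants
    have h6 : ∀ i : Fin (2*n+1), ∏ _j ∈ Finset.Ioi i, ((2:ℂ)*I) = (2*I)^(Finset.Ioi i).card := by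
      intro i
      rw [Finset.prod_const]
    rw [Finset.prod_congr rfl fun i _ => h6 i, Finset.prod_pow_eq_pow_sum, card_sum_Ioi]

lemma Amat_det : (Amat n x).det
    = (2:ℂ)^(2*n^2) * ∏ i : Fin (2*n+1), ∏ j ∈ Finset.Ioi i,
        ((Real.sin ((x j - x i)/2) : ℝ) : ℂ) := by
  rw [A_eq_DB, Matrix.det_mul, Dmat_det, one_mul, B_eq_CM, Matrix.det_mul, Cmat_det,
    M_det, W_det, prod_pairs]
  have hexp : (∏ j, Complex.exp (-(n:ℂ) * (x j : ℂ) * I))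
      * Complex.exp ((n:ℂ) * ((∑ j, x j : ℝ) : ℂ) * I) = 1 := by
    rw [← Complex.exp_sum, ← Complex.exp_add, ← Complex.exp_zero]
    congr 1
    have : ∑ j : Fin (2*n+1), -(n:ℂ) * (x j : ℂ) * I = -(n:ℂ) * ((∑ j, x j : ℝ) : ℂ) * I := by
      push_cast
      rw [← Finset.sum_mul, ← Finset.mul_sum]
    rw [this]
    ring
  calc (I/2)^n * ((∏ j, Complex.exp (-(n:ℂ) * (x j : ℂ) * I)) *
        (Complex.exp ((n:ℂ) * ((∑ j, x j : ℝ) : ℂ) * I) * (2*I)^(n*(2*n+1)) *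
          ∏ i : Fin (2*n+1), ∏ j ∈ Finset.Ioi i, ((Real.sin ((x j - x i)/2) : ℝ) : ℂ)))
      = ((∏ j, Complex.exp (-(n:ℂ) * (x j : ℂ) * I)) *
          Complex.exp ((n:ℂ) * ((∑ j, x j : ℝ) : ℂ) * I))
        * ((I/2)^n * (2*I)^(n*(2*n+1)))
        * ∏ i : Fin (2*n+1), ∏ j ∈ Finset.Ioi i, ((Real.sin ((x j - x i)/2) : ℝ) : ℂ) := by
        ring
    _ = (2:ℂ)^(2*n^2) * ∏ i : Fin (2*n+1), ∏ j ∈ Finset.Ioi i,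
          ((Real.sin ((x j - x i)/2) : ℝ) : ℂ) := by
        rw [hexp, one_mul]
        congr 1
        -- constants
        have hI : (I:ℂ)^(n + n*(2*n+1)) = 1 := by
          rw [show n + n*(2*n+1) = 2*(n*(n+1)) by ring, pow_mul, Complex.I_sq,
            (Nat.even_mul_succ_self n).neg_one_pow]
        rw [div_pow, mul_pow, div_mul_eq_mul_div, mul_comm ((2:ℂ)^(n*(2*n+1))) ((I:ℂ)^(n*(2*n+1))),
          ← mul_assoc, ← pow_add, hI, one_mul]
        rw [show n*(2*n+1) = 2*n^2 + n by ring, pow_add]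
        field_simp

theorem trig_chebyshev_odd' (a b : ℝ) (hab : b - a ≤ 2 * Real.pi)
    (hx : ∀ i, x i ∈ Set.Ioo a b) (hmono : StrictMono x) :
    0 < Matrix.det (Matrix.of fun i j => (fun i : Fin (2 * n + 1) => fun t : ℝ =>
        if (i : ℕ) = 0 then 1
        else if (i : ℕ) % 2 = 1 then Real.cos (((((i : ℕ) + 1) / 2 : ℕ) : ℝ) * t)
        else Real.sin ((((i : ℕ) / 2 : ℕ) : ℝ) * t)) i (x j)) := by
  set D : ℝ := Matrix.det (Matrix.of fun i j => (fun i : Fin (2 * n + 1) => fun t : ℝ =>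
        if (i : ℕ) = 0 then 1
        else if (i : ℕ) % 2 = 1 then Real.cos (((((i : ℕ) + 1) / 2 : ℕ) : ℝ) * t)
        else Real.sin ((((i : ℕ) / 2 : ℕ) : ℝ) * t)) i (x j)) with hD
  have hmap : ((D : ℝ) : ℂ) = (Amat n x).det := by
    rw [show ((D : ℝ) : ℂ) = Complex.ofRealHom D from rfl, hD, RingHom.map_det]
    congr 1
    ext i j
    simp only [RingHom.mapMatrix_apply, Matrix.map_apply, Matrix.of_apply, Amat,
      Complex.ofRealHom_eq_coe]
    split_ifs
    · norm_cast
    · rw [Complex.ofReal_cos]; norm_cast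
    · rw [Complex.ofReal_sin]; norm_cast
  have hval : D = (2:ℝ)^(2*n^2) * ∏ i : Fin (2*n+1), ∏ j ∈ Finset.Ioi i,
      Real.sin ((x j - x i)/2) := by
    have h2 : ((D : ℝ) : ℂ) = (((2:ℝ)^(2*n^2) * ∏ i : Fin (2*n+1), ∏ j ∈ Finset.Ioi i,
        Real.sin ((x j - x i)/2) : ℝ) : ℂ) := by
      rw [hmap, Amat_det]
      push_cast
      ring
    exact_mod_cast h2
  rw [hval]
  apply mul_pos (by positivity)
  apply Finset.prod_pos
  intro i _
  apply Finset.prod_pos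
  intro j hj
  have hij : i < j := Finset.mem_Ioi.mp hj
  have h1 : x i < x j := hmono hij
  have h2 : x j - x i < b - a := by
    have := (hx i).1; have := (hx j).2; linarith
  apply Real.sin_pos_of_pos_of_lt_pi
  · linarith
  · linarith [Real.pi_pos]

/-- The function `ω(x) = (1, cos x, sin x, …, cos nx, sin nx)` is a `(2n+1)`-dimensional
positive Chebyshev system over any open interval of length at most `2π`. -/
theorem trig_chebyshev_odd (n : ℕ) (a b : ℝ) (hab : b - a ≤ 2 * Real.pi) :
    IsPosChebyshev
      (fun i : Fin (2 * n + 1) => fun x : ℝ =>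
        if (i : ℕ) = 0 then 1
        else if (i : ℕ) % 2 = 1 then Real.cos (((((i : ℕ) + 1) / 2 : ℕ) : ℝ) * x)
        else Real.sin ((((i : ℕ) / 2 : ℕ) : ℝ) * x))
      (Set.Ioo a b) := by
  intro x hx hmono
  exact trig_chebyshev_odd' n x a b hab hx hmono
end
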